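/- arXiv:1601.00361 — 8 statements merged into one kernel-verified Lean document; each statement's English description precedes it below -/
import Mathlib

section
/- Assume moreover that 𝒜 is bounded, set K₀ := sup_{s ≥ 0} 𝒜(s), and let a > 0. For t > 0 one has K₀/cosh(a t) ∈ [0, K₀), so the integrand below is defined, and for every d > 0 the Lebesgue integral I(d) = ∫_d^∞ 𝒜⁻¹(K₀/cosh(a t)) dt is finite; moreover I is strictly decreasing on (0,∞) and I(d) → 0 as d → +∞. -/
open MeasureTheory

/-- Assume 𝒜 is bounded, `K₀ := sup_{s ≥ 0} 𝒜(s)`, and `a > 0`. For `t > 0`,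
`K₀/cosh(a t) ∈ [0, K₀)`, so the integrand is defined; for every `d > 0` the Lebesgue
integral `I(d) = ∫_d^∞ 𝒜⁻¹(K₀/cosh(a t)) dt` is finite; moreover `I` is strictly
decreasing on `(0,∞)` and `I(d) → 0` as `d → +∞`. -/
theorem stmt_1 (A Ainv : ℝ → ℝ)
    (hA : ContDiffOn ℝ 1 A (Set.Ici 0))
    (hA0 : A 0 = 0)
    (hA' : ∀ s : ℝ, 0 < s → 0 < deriv A s)
    (q δ₀ D : ℝ) (hq : 0 < q) (hδ₀ : 0 < δ₀) (hD : 0 < D)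
    (hgrowth : ∀ s ∈ Set.Icc (0:ℝ) δ₀, D * s ^ q ≤ A s)
    (hbdd : BddAbove (A '' Set.Ici 0))
    (K₀ : ℝ) (hK₀ : K₀ = sSup (A '' Set.Ici 0))
    (hAinvL : ∀ s : ℝ, 0 ≤ s → Ainv (A s) = s)
    (hAinvR : ∀ t : ℝ, 0 ≤ t → t < K₀ → 0 ≤ Ainv t ∧ A (Ainv t) = t)
    (a : ℝ) (ha : 0 < a) :
    (∀ t : ℝ, 0 < t → K₀ / Real.cosh (a * t) ∈ Set.Ico 0 K₀) ∧
    (∀ d : ℝ, 0 < d →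
      MeasureTheory.IntegrableOn (fun t => Ainv (K₀ / Real.cosh (a * t))) (Set.Ioi d)) ∧
    StrictAntiOn (fun d => ∫ t in Set.Ioi d, Ainv (K₀ / Real.cosh (a * t))) (Set.Ioi 0) ∧
    Filter.Tendsto (fun d => ∫ t in Set.Ioi d, Ainv (K₀ / Real.cosh (a * t)))
      Filter.atTop (nhds 0) := by
  set f : ℝ → ℝ := fun t => Ainv (K₀ / Real.cosh (a * t)) with hfdef
  -- Basic facts about A
  have hAmono : StrictMonoOn A (Set.Ici 0) := by
    apply strictMonoOn_of_deriv_pos (convex_Ici 0) hA.continuousOn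
    intro x hx
    rw [interior_Ici] at hx
    exact hA' x hx
  have hAδpos : 0 < A δ₀ :=
    lt_of_lt_of_le (by positivity) (hgrowth δ₀ ⟨hδ₀.le, le_rfl⟩)
  have hAδK : A δ₀ ≤ K₀ := hK₀ ▸ le_csSup hbdd ⟨δ₀, hδ₀.le, rfl⟩
  have hK₀pos : 0 < K₀ := hAδpos.trans_le hAδK
  -- Monotonicity of Ainv on [0, K₀)
  have hAinv_mono : ∀ x y : ℝ, 0 ≤ x → x ≤ y → y < K₀ → Ainv x ≤ Ainv y := by
    intro x y hx hxy hy
    obtain ⟨hx0, hxA⟩ := hAinvR x hx (lt_of_le_of_lt hxy hy)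
    obtain ⟨hy0, hyA⟩ := hAinvR y (hx.trans hxy) hy
    by_contra h
    push_neg at h
    have := hAmono (Set.mem_Ici.2 hy0) (Set.mem_Ici.2 hx0) h
    rw [hxA, hyA] at this
    linarith
  -- Ainv x ≤ δ₀ whenever x ≤ A δ₀
  have hAinv_le : ∀ x : ℝ, 0 ≤ x → x < K₀ → x ≤ A δ₀ → Ainv x ≤ δ₀ := by
    intro x hx hxK hxδ
    obtain ⟨hx0, hxA⟩ := hAinvR x hx hxK
    by_contra h
    push_neg at h
    have := hAmono (Set.mem_Ici.2 hδ₀.le) (Set.mem_Ici.2 hx0) h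
    rw [hxA] at this
    linarith
  -- The first bullet: membership
  have hmem : ∀ t : ℝ, 0 < t → K₀ / Real.cosh (a * t) ∈ Set.Ico 0 K₀ := by
    intro t ht
    have hc1 : 1 < Real.cosh (a * t) := Real.one_lt_cosh.2 (by positivity)
    refine ⟨div_nonneg hK₀pos.le (Real.cosh_pos _).le, ?_⟩
    rw [div_lt_iff₀ (by linarith)]
    nlinarith
  -- The integrand is nonnegative and positive on (0,∞)
  have hf_nonneg : ∀ t : ℝ, 0 < t → 0 ≤ f t := fun t ht =>
    (hAinvR _ (hmem t ht).1 (hmem t ht).2).1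
  have hf_A : ∀ t : ℝ, 0 < t → A (f t) = K₀ / Real.cosh (a * t) := fun t ht =>
    (hAinvR _ (hmem t ht).1 (hmem t ht).2).2
  have hf_pos : ∀ t : ℝ, 0 < t → 0 < f t := by
    intro t ht
    rcases (hf_nonneg t ht).lt_or_eq with h | h
    · exact h
    · exfalso
      have := hf_A t ht
      rw [← h, hA0] at this
      have : 0 < K₀ / Real.cosh (a * t) := div_pos hK₀pos (Real.cosh_pos _)
      rw [← hf_A t ht, ← h, hA0] at this
      exact lt_irrefl 0 this
  -- f is antitone on (0,∞)
  have hf_anti : AntitoneOn f (Set.Ioi 0) := by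
    intro s hs t ht hst
    simp only [Set.mem_Ioi] at hs ht
    have hcosh : Real.cosh (a * s) ≤ Real.cosh (a * t) := by
      rw [Real.cosh_le_cosh, abs_of_pos (by positivity), abs_of_pos (by positivity)]
      nlinarith
    have hdiv : K₀ / Real.cosh (a * t) ≤ K₀ / Real.cosh (a * s) :=
      div_le_div_of_nonneg_left hK₀pos.le (Real.cosh_pos _) hcosh
    exact hAinv_mono _ _ (hmem t ht).1 hdiv (hmem s hs).2
  -- Exponential bound: choose T
  have htend0 : Filter.Tendsto (fun t : ℝ => 2 * K₀ * Real.exp (-(a * t)))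
      Filter.atTop (nhds 0) := by
    have h1 : Filter.Tendsto (fun t : ℝ => -(a * t)) Filter.atTop Filter.atBot := by
      apply Filter.tendsto_neg_atBot_iff.2
      exact Filter.Tendsto.const_mul_atTop ha Filter.tendsto_id
    have := (Real.tendsto_exp_atBot.comp h1).const_mul (2 * K₀)
    simpa using this
  obtain ⟨T, hT⟩ := (Filter.eventually_atTop.1
    ((htend0.eventually (eventually_le_nhds (show (0:ℝ) < A δ₀ from hAδpos))).and
      (Filter.eventually_gt_atTop 0)))
  have hT0 : 0 < T := (hT T le_rfl).2
  -- the pointwise exponential bound for t ≥ T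
  set b : ℝ := a / q with hbdef
  have hb : 0 < b := div_pos ha hq
  set C : ℝ := (2 * K₀ / D) ^ (1 / q) with hCdef
  have hbound : ∀ t : ℝ, T ≤ t → f t ≤ C * Real.exp (-(b * t)) := by
    intro t htT
    have ht0 : 0 < t := hT0.trans_le htT
    have hcosh_ge : Real.exp (a * t) / 2 ≤ Real.cosh (a * t) := by
      rw [Real.cosh_eq]
      have := Real.exp_pos (-(a * t))
      linarith
    have hx_le : K₀ / Real.cosh (a * t) ≤ 2 * K₀ * Real.exp (-(a * t)) := by
      rw [Real.exp_neg]
      rw [div_le_iff₀ (Real.cosh_pos _)]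
      have h2 : 2 * K₀ * (Real.exp (a * t))⁻¹ * (Real.exp (a * t) / 2) = K₀ := by
        field_simp
      calc K₀ = 2 * K₀ * (Real.exp (a * t))⁻¹ * (Real.exp (a * t) / 2) := h2.symm
        _ ≤ 2 * K₀ * (Real.exp (a * t))⁻¹ * Real.cosh (a * t) := by
            apply mul_le_mul_of_nonneg_left hcosh_ge
            positivity
    have hxAδ : K₀ / Real.cosh (a * t) ≤ A δ₀ := hx_le.trans (hT t htT).1
    have hfδ : f t ≤ δ₀ := hAinv_le _ (hmem t ht0).1 (hmem t ht0).2 hxAδ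
    have hgr : D * (f t) ^ q ≤ K₀ / Real.cosh (a * t) := by
      have := hgrowth (f t) ⟨hf_nonneg t ht0, hfδ⟩
      rw [hf_A t ht0] at this
      exact this
    have hpow : (f t) ^ q ≤ (2 * K₀ / D) * Real.exp (-(a * t)) := by
      rw [div_mul_eq_mul_div, le_div_iff₀ hD]
      nlinarith [hx_le]
    have hfq : f t = ((f t) ^ q) ^ (1 / q) := by
      rw [← Real.rpow_mul (hf_nonneg t ht0), mul_one_div, div_self hq.ne', Real.rpow_one]
    calc f t = ((f t) ^ q) ^ (1 / q) := hfq
      _ ≤ ((2 * K₀ / D) * Real.exp (-(a * t))) ^ (1 / q) := by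
          apply Real.rpow_le_rpow (Real.rpow_nonneg (hf_nonneg t ht0) q) hpow (by positivity)
      _ = C * Real.exp (-(b * t)) := by
          rw [Real.mul_rpow (by positivity) (Real.exp_pos _).le, ← Real.exp_mul, hbdef]
          congr 2
          field_simp
  -- Integrability
  have hint : ∀ d : ℝ, 0 < d → IntegrableOn f (Set.Ioi d) := by
    intro d hd
    set T' : ℝ := max T d with hT'def
    have hdT' : d ≤ T' := le_max_right _ _
    have hTT' : T ≤ T' := le_max_left _ _
    have hT'0 : 0 < T' := hd.trans_le hdT'
    have hsplit : Set.Ioi d = Set.Ioc d T' ∪ Set.Ioi T' := (Set.Ioc_union_Ioi_eq_Ioi hdT').symm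
    rw [hsplit]
    apply IntegrableOn.union
    · -- bounded on Ioc d T'
      have hmeas : AEMeasurable f (volume.restrict (Set.Ioc d T')) :=
        aemeasurable_restrict_of_antitoneOn measurableSet_Ioc
          (hf_anti.mono (fun x hx => lt_of_lt_of_le hd hx.1.le))
      apply Integrable.mono' (integrableOn_const (C := f d) measure_Ioc_lt_top.ne) hmeas.aestronglyMeasurable
      rw [ae_restrict_iff' measurableSet_Ioc]
      filter_upwards with t ht
      have ht0 : 0 < t := hd.trans ht.1
      rw [Real.norm_eq_abs, abs_of_nonneg (hf_nonneg t ht0)]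
      exact hf_anti (Set.mem_Ioi.2 hd) (Set.mem_Ioi.2 ht0) ht.1.le
    · -- exponential bound on Ioi T'
      have hmeas : AEMeasurable f (volume.restrict (Set.Ioi T')) :=
        aemeasurable_restrict_of_antitoneOn measurableSet_Ioi
          (hf_anti.mono (fun x hx => lt_of_lt_of_le hT'0 (le_of_lt hx)))
      have hexp : IntegrableOn (fun t => C * Real.exp (-b * t)) (Set.Ioi T') :=
        (exp_neg_integrableOn_Ioi T' hb).const_mul C
      apply Integrable.mono' hexp hmeas.aestronglyMeasurable
      rw [ae_restrict_iff' measurableSet_Ioi]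
      filter_upwards with t ht
      have ht0 : 0 < t := hT'0.trans ht
      rw [Real.norm_eq_abs, abs_of_nonneg (hf_nonneg t ht0)]
      have := hbound t (hTT'.trans ht.le)
      simpa [neg_mul] using this
  -- Splitting formula for the integral
  have hIsplit : ∀ d₁ d₂ : ℝ, 0 < d₁ → d₁ < d₂ →
      ∫ t in Set.Ioi d₁, f t = (∫ t in Set.Ioc d₁ d₂, f t) + ∫ t in Set.Ioi d₂, f t := by
    intro d₁ d₂ h1 h12
    rw [← Set.Ioc_union_Ioi_eq_Ioi h12.le]
    exact setIntegral_union Set.Ioc_disjoint_Ioi_same measurableSet_Ioi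
      ((hint d₁ h1).mono_set (fun x hx => hx.1))
      ((hint d₂ (h1.trans h12)).mono_set (Set.Ioi_subset_Ioi le_rfl))
  -- middle integral is positive
  have hmid : ∀ d₁ d₂ : ℝ, 0 < d₁ → d₁ < d₂ → 0 < ∫ t in Set.Ioc d₁ d₂, f t := by
    intro d₁ d₂ h1 h12
    have hfi : IntegrableOn f (Set.Ioc d₁ d₂) :=
      (hint d₁ h1).mono_set (fun x hx => hx.1)
    have hconst : ∫ _ in Set.Ioc d₁ d₂, f d₂ ≤ ∫ t in Set.Ioc d₁ d₂, f t := by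
      apply setIntegral_mono_on (integrableOn_const measure_Ioc_lt_top.ne) hfi
        measurableSet_Ioc
      intro t ht
      exact hf_anti (Set.mem_Ioi.2 (h1.trans ht.1)) (Set.mem_Ioi.2 (h1.trans h12)) ht.2
    have hval : ∫ _ in Set.Ioc d₁ d₂, f d₂ = (d₂ - d₁) * f d₂ := by
      rw [setIntegral_const, measureReal_def, Real.volume_Ioc, ENNReal.toReal_ofReal (by linarith), smul_eq_mul]
    have : 0 < (d₂ - d₁) * f d₂ :=
      mul_pos (by linarith) (hf_pos d₂ (h1.trans h12))
    linarith [hval ▸ hconst]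
  -- strict antitonicity
  have hanti : StrictAntiOn (fun d => ∫ t in Set.Ioi d, f t) (Set.Ioi 0) := by
    intro d₁ h1 d₂ h2 h12
    simp only [Set.mem_Ioi] at h1 h2
    have := hIsplit d₁ d₂ h1 h12
    have := hmid d₁ d₂ h1 h12
    simp only
    linarith
  -- tendsto 0
  have htendI : Filter.Tendsto (fun d => ∫ t in Set.Ioi d, f t) Filter.atTop (nhds 0) := by
    set T₁ : ℝ := max T 1 with hT₁def
    have hT₁0 : 0 < T₁ := lt_of_lt_of_le one_pos (le_max_right _ _)
    have hIoiT₁ : IntegrableOn f (Set.Ioi T₁) := hint T₁ hT₁0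
    have h1 : Filter.Tendsto (fun d => ∫ t in T₁..d, f t) Filter.atTop
        (nhds (∫ t in Set.Ioi T₁, f t)) :=
      intervalIntegral_tendsto_integral_Ioi T₁ hIoiT₁ Filter.tendsto_id
    have h2 : Filter.Tendsto (fun d => (∫ t in Set.Ioi T₁, f t) - ∫ t in T₁..d, f t)
        Filter.atTop (nhds 0) := by
      have := Filter.Tendsto.sub (tendsto_const_nhds
        (x := ∫ t in Set.Ioi T₁, f t) (f := Filter.atTop)) h1
      simpa using this
    apply h2.congr'
    filter_upwards [Filter.eventually_gt_atTop T₁] with d hd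
    rw [intervalIntegral.integral_of_le hd.le]
    have := hIsplit T₁ d hT₁0 hd
    linarith
  exact ⟨hmem, hint, hanti, htendI⟩
end

section
/- Assume moreover that 𝒜 is bounded, set K₀ := sup_{s ≥ 0} 𝒜(s), and let a > 0. Then ∫_0^∞ 𝒜⁻¹(K₀/cosh(a r)) dr = +∞ (as a Lebesgue integral of a nonnegative function) if and only if ∫_0^{K₀} 𝒜⁻¹(t)/√(K₀ − t) dt = +∞. -/
open MeasureTheory

set_option maxHeartbeats 1000000

/-- One–dimensional change of variables for lower Lebesgue integrals. -/
theorem my_lintegral_image_eq_lintegral_abs_deriv_mul {s : Set ℝ} {f f' : ℝ → ℝ}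
    (hs : MeasurableSet s) (hf' : ∀ x ∈ s, HasDerivWithinAt f (f' x) s x)
    (hf : Set.InjOn f s) (g : ℝ → ENNReal) :
    ∫⁻ x in f '' s, g x = ∫⁻ x in s, ENNReal.ofReal |f' x| * g (f x) := by
  simpa only [ContinuousLinearMap.det_toSpanSingleton] using
    lintegral_image_eq_lintegral_abs_det_fderiv_mul volume hs
      (fun x hx => (hf' x hx).hasFDerivWithinAt) hf g

/-- Assume 𝒜 is bounded, `K₀ := sup_{s ≥ 0} 𝒜(s)`, and `a > 0`. Then
`∫_0^∞ 𝒜⁻¹(K₀/cosh(a r)) dr = +∞` (as a Lebesgue integral of a nonnegative function)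
if and only if `∫_0^{K₀} 𝒜⁻¹(t)/√(K₀ − t) dt = +∞`. -/
theorem stmt_3 (A Ainv : ℝ → ℝ)
    (hA : ContDiffOn ℝ 1 A (Set.Ici 0))
    (hA0 : A 0 = 0)
    (hA' : ∀ s : ℝ, 0 < s → 0 < deriv A s)
    (q δ₀ D : ℝ) (hq : 0 < q) (hδ₀ : 0 < δ₀) (hD : 0 < D)
    (hgrowth : ∀ s ∈ Set.Icc (0:ℝ) δ₀, D * s ^ q ≤ A s)
    (hbdd : BddAbove (A '' Set.Ici 0))
    (K₀ : ℝ) (hK₀ : K₀ = sSup (A '' Set.Ici 0))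
    (hAinvL : ∀ s : ℝ, 0 ≤ s → Ainv (A s) = s)
    (hAinvR : ∀ t : ℝ, 0 ≤ t → t < K₀ → 0 ≤ Ainv t ∧ A (Ainv t) = t)
    (a : ℝ) (ha : 0 < a) :
    (∫⁻ r in Set.Ioi (0:ℝ), ENNReal.ofReal (Ainv (K₀ / Real.cosh (a * r))) = ⊤) ↔
    (∫⁻ t in Set.Ioo (0:ℝ) K₀, ENNReal.ofReal (Ainv t / Real.sqrt (K₀ - t)) = ⊤) := by
  -- Basic positivity facts
  have hAδ₀ : 0 < A δ₀ :=
    lt_of_lt_of_le (by positivity) (hgrowth δ₀ ⟨le_of_lt hδ₀, le_rfl⟩)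
  have hK1 : A δ₀ ≤ K₀ := hK₀ ▸ le_csSup hbdd ⟨δ₀, le_of_lt hδ₀, rfl⟩
  have hK₀pos : 0 < K₀ := lt_of_lt_of_le hAδ₀ hK1
  -- A is strictly monotone on [0, ∞)
  have hAmono : StrictMonoOn A (Set.Ici 0) := by
    apply strictMonoOn_of_deriv_pos (convex_Ici 0) hA.continuousOn
    intro x hx
    rw [interior_Ici] at hx
    exact hA' x hx
  have hAδ₀K : A δ₀ < K₀ := by
    have h1 : A δ₀ < A (δ₀ + 1) :=
      hAmono (Set.mem_Ici.2 hδ₀.le) (Set.mem_Ici.2 (by linarith)) (lt_add_one δ₀)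
    have h2 : A (δ₀ + 1) ≤ K₀ := hK₀ ▸ le_csSup hbdd ⟨δ₀ + 1, by simp; linarith, rfl⟩
    linarith
  -- bound on Ainv near 0
  have hAinv_le : ∀ t : ℝ, 0 < t → t ≤ A δ₀ → Ainv t ≤ (t / D) ^ (1/q) := by
    intro t ht htδ
    have htK : t < K₀ := lt_of_le_of_lt htδ hAδ₀K
    obtain ⟨h0, hAt⟩ := hAinvR t ht.le htK
    have h1 : Ainv t ≤ δ₀ := by
      by_contra h
      push_neg at h
      have := hAmono (Set.mem_Ici.2 hδ₀.le) (Set.mem_Ici.2 h0) h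
      rw [hAt] at this
      linarith
    have h2 : D * Ainv t ^ q ≤ t := by
      have := hgrowth (Ainv t) ⟨h0, h1⟩
      rw [hAt] at this
      exact this
    have h3 : Ainv t ^ q ≤ t / D := (le_div_iff₀' hD).2 h2
    have h4 : (Ainv t ^ q) ^ (1/q) ≤ (t/D) ^ (1/q) :=
      Real.rpow_le_rpow (Real.rpow_nonneg h0 q) h3 (by positivity)
    rwa [← Real.rpow_mul h0, mul_one_div, div_self hq.ne', Real.rpow_one] at h4
  -- the cut point
  set c : ℝ := min (A δ₀) (K₀ / 2) with hc
  have hc0 : 0 < c := lt_min hAδ₀ (by linarith)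
  have hcK : c < K₀ := lt_of_le_of_lt (min_le_right _ _) (by linarith)
  have hcδ : c ≤ A δ₀ := min_le_left _ _
  have hcsq : c ^ 2 < K₀ ^ 2 := by nlinarith
  -- the substitution map and its derivative
  have hcosh : ∀ r : ℝ, HasDerivAt (fun r => Real.cosh (a * r)) (a * Real.sinh (a * r)) r := by
    intro r
    have h := (Real.hasDerivAt_cosh (a * r)).comp r ((hasDerivAt_id r).const_mul a)
    simpa [mul_comm, Function.comp_def] using h
  have hψd : ∀ r : ℝ, HasDerivAt (fun r => K₀ / Real.cosh (a * r))
      (-(K₀ * (a * Real.sinh (a * r)) / Real.cosh (a * r) ^ 2)) r := by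
    intro r
    have h := ((hcosh r).inv (Real.cosh_pos (a * r)).ne').const_mul K₀
    have he : -(K₀ * (a * Real.sinh (a * r)) / Real.cosh (a * r) ^ 2)
        = K₀ * (-(a * Real.sinh (a * r)) / Real.cosh (a * r) ^ 2) := by ring
    rw [he]
    simpa [div_eq_mul_inv] using h
  -- image of the substitution map
  have himg : (fun r => K₀ / Real.cosh (a * r)) '' Set.Ioi 0 = Set.Ioo 0 K₀ := by
    apply Set.eq_of_subset_of_subset
    · rintro t ⟨r, hr, rfl⟩
      rw [Set.mem_Ioi] at hr
      refine ⟨div_pos hK₀pos (Real.cosh_pos _), ?_⟩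
      rw [div_lt_iff₀ (Real.cosh_pos _)]
      have h1 : (1:ℝ) < Real.cosh (a * r) := Real.one_lt_cosh.2 (by positivity)
      nlinarith
    · rintro t ⟨ht0, htK⟩
      set R : ℝ := (2 * K₀ / t) / a with hR
      have hRpos : 0 < R := by positivity
      have haR : a * R * t = 2 * K₀ := by
        rw [hR]
        field_simp
      have hψR : K₀ / Real.cosh (a * R) < t := by
        rw [div_lt_iff₀ (Real.cosh_pos _)]
        have h1 := Real.add_one_le_exp (a * R)
        have h2 := Real.exp_pos (-(a * R))
        rw [Real.cosh_eq]
        nlinarith [mul_pos h2 ht0, mul_le_mul_of_nonneg_right h1 ht0.le]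
      have hcont : ContinuousOn (fun r => K₀ / Real.cosh (a * r)) (Set.Icc 0 R) := by
        apply ContinuousOn.div continuousOn_const
        · exact (Real.continuous_cosh.comp (continuous_const.mul continuous_id)).continuousOn
        · exact fun x _ => (Real.cosh_pos _).ne'
      have hIVT := intermediate_value_Ioo' hRpos.le hcont
      have hmem : t ∈ Set.Ioo (K₀ / Real.cosh (a * R)) (K₀ / Real.cosh (a * 0)) := by
        rw [mul_zero, Real.cosh_zero, div_one]
        exact ⟨hψR, htK⟩
      obtain ⟨r, hr, hrt⟩ := hIVT hmem
      exact ⟨r, hr.1, hrt⟩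
  -- injectivity
  have hinj : Set.InjOn (fun r => K₀ / Real.cosh (a * r)) (Set.Ioi 0) := by
    intro r1 h1 r2 h2 h
    rw [Set.mem_Ioi] at h1 h2
    simp only at h
    have hch : Real.cosh (a * r1) = Real.cosh (a * r2) := by
      have := (div_eq_div_iff (Real.cosh_pos (a * r1)).ne' (Real.cosh_pos (a * r2)).ne').1 h
      nlinarith
    have habs : |a * r1| = |a * r2| := by
      by_contra hne
      rcases lt_or_gt_of_ne hne with hlt | hlt
      · exact absurd hch (ne_of_lt (Real.cosh_lt_cosh.2 hlt))
      · exact absurd hch.symm (ne_of_lt (Real.cosh_lt_cosh.2 hlt))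
    rw [abs_of_pos (by positivity), abs_of_pos (by positivity)] at habs
    exact mul_left_cancel₀ ha.ne' habs
  -- the transformed integrand
  set g : ℝ → ENNReal :=
    fun t => ENNReal.ofReal (Ainv t * (K₀ / (a * t * Real.sqrt (K₀ ^ 2 - t ^ 2)))) with hg
  -- change of variables
  have hchg : ∫⁻ r in Set.Ioi (0:ℝ), ENNReal.ofReal (Ainv (K₀ / Real.cosh (a * r)))
      = ∫⁻ t in Set.Ioo (0:ℝ) K₀, g t := by
    rw [← himg, my_lintegral_image_eq_lintegral_abs_deriv_mul measurableSet_Ioi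
      (fun r _ => (hψd r).hasDerivWithinAt) hinj g]
    apply setLIntegral_congr_fun measurableSet_Ioi
    intro r hr
    rw [Set.mem_Ioi] at hr
    have hch1 : (1:ℝ) < Real.cosh (a * r) := Real.one_lt_cosh.2 (by positivity)
    have hchpos : (0:ℝ) < Real.cosh (a * r) := by linarith
    have hsh : (0:ℝ) < Real.sinh (a * r) := Real.sinh_pos_iff.2 (by positivity)
    have ht0 : 0 < K₀ / Real.cosh (a * r) := div_pos hK₀pos hchpos
    have htK : K₀ / Real.cosh (a * r) < K₀ := by
      rw [div_lt_iff₀ hchpos]; nlinarith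
    obtain ⟨hinv0, -⟩ := hAinvR _ ht0.le htK
    have hid : Real.cosh (a * r) ^ 2 = Real.sinh (a * r) ^ 2 + 1 := Real.cosh_sq _
    have hsq : Real.sqrt (K₀ ^ 2 - (K₀ / Real.cosh (a * r)) ^ 2)
        = K₀ * Real.sinh (a * r) / Real.cosh (a * r) := by
      rw [show K₀ ^ 2 - (K₀ / Real.cosh (a * r)) ^ 2
          = (K₀ * Real.sinh (a * r) / Real.cosh (a * r)) ^ 2 by
        field_simp
        nlinarith]
      exact Real.sqrt_sq (by positivity)
    simp only [hg]
    rw [hsq, ← ENNReal.ofReal_mul (abs_nonneg _)]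
    congr 1
    rw [abs_neg, abs_of_pos (by positivity)]
    field_simp
  -- split both integrals at c
  have hsplit : ∀ f : ℝ → ENNReal, ∫⁻ t in Set.Ioo (0:ℝ) K₀, f t
      = (∫⁻ t in Set.Ioc (0:ℝ) c, f t) + ∫⁻ t in Set.Ioo c K₀, f t := by
    intro f
    rw [← Set.Ioc_union_Ioo_eq_Ioo hc0.le hcK,
      lintegral_union measurableSet_Ioo
        (Set.Ioc_disjoint_Ioi_same.mono_right Set.Ioo_subset_Ioi_self)]
  -- head of g is finite
  have hGhead : (∫⁻ t in Set.Ioc (0:ℝ) c, g t) ≠ ⊤ := by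
    set C : ℝ := K₀ / (a * Real.sqrt (K₀ ^ 2 - c ^ 2) * D ^ (1/q)) with hC
    have hsqc : (0:ℝ) < Real.sqrt (K₀ ^ 2 - c ^ 2) := Real.sqrt_pos.2 (by nlinarith)
    have hbound : ∀ t ∈ Set.Ioc (0:ℝ) c, g t ≤ ENNReal.ofReal (C * t ^ (1/q - 1)) := by
      intro t ht
      obtain ⟨ht0, htc⟩ := ht
      have htK : t < K₀ := lt_of_le_of_lt htc hcK
      obtain ⟨hinv0, -⟩ := hAinvR t ht0.le htK
      have hsqt : Real.sqrt (K₀ ^ 2 - c ^ 2) ≤ Real.sqrt (K₀ ^ 2 - t ^ 2) := by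
        apply Real.sqrt_le_sqrt; nlinarith
      have e1 : Ainv t ≤ (t / D) ^ (1/q) := hAinv_le t ht0 (le_trans htc hcδ)
      have e2 : Ainv t * (K₀ / (a * t * Real.sqrt (K₀ ^ 2 - t ^ 2)))
          ≤ (t / D) ^ (1/q) * (K₀ / (a * t * Real.sqrt (K₀ ^ 2 - c ^ 2))) := by
        apply mul_le_mul e1 _ (by positivity) (by positivity)
        apply div_le_div_of_nonneg_left hK₀pos.le (by positivity)
        have : a * t * Real.sqrt (K₀ ^ 2 - c ^ 2) ≤ a * t * Real.sqrt (K₀ ^ 2 - t ^ 2) := by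
          apply mul_le_mul_of_nonneg_left hsqt (by positivity)
        exact this
      have e3 : (t / D) ^ (1/q) * (K₀ / (a * t * Real.sqrt (K₀ ^ 2 - c ^ 2)))
          = C * t ^ (1/q - 1) := by
        rw [Real.div_rpow ht0.le hD.le, Real.rpow_sub ht0, Real.rpow_one, hC]
        field_simp
      simp only [hg]
      exact ENNReal.ofReal_le_ofReal (by rw [← e3]; exact e2)
    have hint : IntegrableOn (fun t : ℝ => C * t ^ (1/q - 1)) (Set.Ioc (0:ℝ) c) := by
      apply Integrable.const_mul
      have h := intervalIntegral.intervalIntegrable_rpow' (a := (0:ℝ)) (b := c) (r := 1/q - 1)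
        (by have : 0 < 1/q := by positivity
            linarith)
      rwa [intervalIntegrable_iff, Set.uIoc_of_le hc0.le] at h
    refine ne_of_lt ?_
    calc ∫⁻ t in Set.Ioc (0:ℝ) c, g t
        ≤ ∫⁻ t in Set.Ioc (0:ℝ) c, ENNReal.ofReal (C * t ^ (1/q - 1)) :=
          setLIntegral_mono' measurableSet_Ioc hbound
      _ < ⊤ := hint.lintegral_lt_top
  -- head of F is finite
  have hFhead : (∫⁻ t in Set.Ioc (0:ℝ) c,
      ENNReal.ofReal (Ainv t / Real.sqrt (K₀ - t))) ≠ ⊤ := by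
    set M : ℝ := (c / D) ^ (1/q) / Real.sqrt (K₀ - c) with hM
    have hsqc : (0:ℝ) < Real.sqrt (K₀ - c) := Real.sqrt_pos.2 (by linarith)
    have hbound : ∀ t ∈ Set.Ioc (0:ℝ) c,
        ENNReal.ofReal (Ainv t / Real.sqrt (K₀ - t)) ≤ ENNReal.ofReal M := by
      intro t ht
      obtain ⟨ht0, htc⟩ := ht
      apply ENNReal.ofReal_le_ofReal
      rw [hM]
      apply div_le_div₀ (by positivity)
      · calc Ainv t ≤ (t / D) ^ (1/q) := hAinv_le t ht0 (le_trans htc hcδ)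
          _ ≤ (c / D) ^ (1/q) := Real.rpow_le_rpow (by positivity) (by gcongr) (by positivity)
      · exact hsqc
      · exact Real.sqrt_le_sqrt (by linarith)
    refine ne_of_lt ?_
    calc ∫⁻ t in Set.Ioc (0:ℝ) c, ENNReal.ofReal (Ainv t / Real.sqrt (K₀ - t))
        ≤ ∫⁻ _ in Set.Ioc (0:ℝ) c, ENNReal.ofReal M :=
          setLIntegral_mono' measurableSet_Ioc hbound
      _ = ENNReal.ofReal M * volume (Set.Ioc (0:ℝ) c) := setLIntegral_const _ _
      _ < ⊤ := ENNReal.mul_lt_top ENNReal.ofReal_lt_top measure_Ioc_lt_top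
  -- tail comparison
  have hdecomp : ∀ t ∈ Set.Ioo c K₀,
      g t = ENNReal.ofReal ((K₀ / (a * t * Real.sqrt (K₀ + t))) * (Ainv t / Real.sqrt (K₀ - t))) := by
    intro t ht
    obtain ⟨htc, htK⟩ := ht
    have ht0 : 0 < t := lt_trans hc0 htc
    have h1 : K₀ ^ 2 - t ^ 2 = (K₀ - t) * (K₀ + t) := by ring
    have h2 : Real.sqrt (K₀ ^ 2 - t ^ 2) = Real.sqrt (K₀ - t) * Real.sqrt (K₀ + t) := by
      rw [h1, Real.sqrt_mul (by linarith)]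
    have hs1 : (0:ℝ) < Real.sqrt (K₀ - t) := Real.sqrt_pos.2 (by linarith)
    have hs2 : (0:ℝ) < Real.sqrt (K₀ + t) := Real.sqrt_pos.2 (by linarith)
    simp only [hg]
    rw [h2]
    congr 1
    field_simp
  set M₁ : ℝ := K₀ / (a * K₀ * Real.sqrt (2 * K₀)) with hM₁
  set M₂ : ℝ := K₀ / (a * c * Real.sqrt K₀) with hM₂
  have hM₁pos : 0 < M₁ := by
    rw [hM₁]; positivity
  have hmbound : ∀ t ∈ Set.Ioo c K₀,
      M₁ ≤ K₀ / (a * t * Real.sqrt (K₀ + t)) ∧ K₀ / (a * t * Real.sqrt (K₀ + t)) ≤ M₂ := by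
    intro t ht
    obtain ⟨htc, htK⟩ := ht
    have ht0 : 0 < t := lt_trans hc0 htc
    constructor
    · rw [hM₁]
      apply div_le_div_of_nonneg_left hK₀pos.le (by positivity)
      gcongr <;> linarith
    · rw [hM₂]
      apply div_le_div_of_nonneg_left hK₀pos.le (by positivity)
      gcongr <;> linarith
  have htail : (∫⁻ t in Set.Ioo c K₀, g t = ⊤)
      ↔ (∫⁻ t in Set.Ioo c K₀, ENNReal.ofReal (Ainv t / Real.sqrt (K₀ - t)) = ⊤) := by
    have hle2 : ∫⁻ t in Set.Ioo c K₀, g t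
        ≤ ENNReal.ofReal M₂ * ∫⁻ t in Set.Ioo c K₀, ENNReal.ofReal (Ainv t / Real.sqrt (K₀ - t)) := by
      rw [← lintegral_const_mul' _ _ ENNReal.ofReal_ne_top]
      apply setLIntegral_mono' measurableSet_Ioo
      intro t ht
      rw [hdecomp t ht, ← ENNReal.ofReal_mul (show (0:ℝ) ≤ M₂ by rw [hM₂]; positivity)]
      apply ENNReal.ofReal_le_ofReal
      have ht0 : 0 < t := lt_trans hc0 ht.1
      have hx : 0 ≤ Ainv t / Real.sqrt (K₀ - t) := by
        obtain ⟨hinv0, -⟩ := hAinvR t ht0.le ht.2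
        positivity
      exact mul_le_mul_of_nonneg_right (hmbound t ht).2 hx
    have hle1 : ENNReal.ofReal M₁ * ∫⁻ t in Set.Ioo c K₀, ENNReal.ofReal (Ainv t / Real.sqrt (K₀ - t))
        ≤ ∫⁻ t in Set.Ioo c K₀, g t := by
      rw [← lintegral_const_mul' _ _ ENNReal.ofReal_ne_top]
      apply setLIntegral_mono' measurableSet_Ioo
      intro t ht
      rw [hdecomp t ht, ← ENNReal.ofReal_mul hM₁pos.le]
      apply ENNReal.ofReal_le_ofReal
      have ht0 : 0 < t := lt_trans hc0 ht.1
      have hx : 0 ≤ Ainv t / Real.sqrt (K₀ - t) := by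
        obtain ⟨hinv0, -⟩ := hAinvR t ht0.le ht.2
        positivity
      exact mul_le_mul_of_nonneg_right (hmbound t ht).1 hx
    constructor
    · intro h
      by_contra hF
      have : ∫⁻ t in Set.Ioo c K₀, g t < ⊤ :=
        lt_of_le_of_lt hle2 (ENNReal.mul_lt_top ENNReal.ofReal_lt_top (lt_top_iff_ne_top.2 hF))
      exact absurd h this.ne
    · intro h
      have h1 : ENNReal.ofReal M₁
          * ∫⁻ t in Set.Ioo c K₀, ENNReal.ofReal (Ainv t / Real.sqrt (K₀ - t)) = ⊤ := by
        rw [h, ENNReal.mul_top (by simp [ENNReal.ofReal_pos.2 hM₁pos, (ENNReal.ofReal_pos.2 hM₁pos).ne'])]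
      exact top_le_iff.1 (h1 ▸ hle1)
  -- conclude
  rw [hchg, hsplit g, hsplit (fun t => ENNReal.ofReal (Ainv t / Real.sqrt (K₀ - t)))]
  rw [ENNReal.add_eq_top, ENNReal.add_eq_top]
  simp only [hGhead, hFhead, false_or]
  exact htail
end

section
/- Let 𝒜 : [0,∞) → ℝ be continuous and strictly increasing with 𝒜(0) = 0, and let K₀ > 0 be such that every t ∈ [0, K₀) lies in the range of 𝒜. If ∫_0^{K₀} 𝒜⁻¹(t)/√(K₀ − t) dt = +∞, then 𝒜 is bounded and sup_{s ≥ 0} 𝒜(s) = K₀. -/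
open MeasureTheory

/-- Let `𝒜 : [0,∞) → ℝ` be continuous and strictly increasing with `𝒜(0) = 0`,
and let `K₀ > 0` be such that every `t ∈ [0, K₀)` lies in the range of 𝒜. If
`∫_0^{K₀} 𝒜⁻¹(t)/√(K₀ − t) dt = +∞`, then 𝒜 is bounded and `sup_{s ≥ 0} 𝒜(s) = K₀`. -/
theorem stmt_6 (A Ainv : ℝ → ℝ)
    (hAcont : ContinuousOn A (Set.Ici 0))
    (hAmono : StrictMonoOn A (Set.Ici 0))
    (hA0 : A 0 = 0)
    (hAinvL : ∀ s : ℝ, 0 ≤ s → Ainv (A s) = s)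
    (K₀ : ℝ) (hK₀ : 0 < K₀)
    (hrange : ∀ t : ℝ, 0 ≤ t → t < K₀ → ∃ s, 0 ≤ s ∧ A s = t)
    (hAinvR : ∀ t : ℝ, 0 ≤ t → t < K₀ → 0 ≤ Ainv t ∧ A (Ainv t) = t)
    (hdiv : ∫⁻ t in Set.Ioo (0:ℝ) K₀, ENNReal.ofReal (Ainv t / Real.sqrt (K₀ - t)) = ⊤) :
    BddAbove (A '' Set.Ici 0) ∧ sSup (A '' Set.Ici 0) = K₀ := by
  -- Key claim: A s < K₀ for every s ≥ 0.
  have hlt : ∀ s : ℝ, 0 ≤ s → A s < K₀ := by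
    intro s hs
    by_contra hge
    push_neg at hge
    -- Then Ainv is bounded by s on (0, K₀), making the integral finite.
    have hbound : ∀ t ∈ Set.Ioo (0:ℝ) K₀, Ainv t ≤ s := by
      intro t ht
      obtain ⟨h0, hAt⟩ := hAinvR t ht.1.le ht.2
      by_contra hgt
      push_neg at hgt
      have := hAmono (Set.mem_Ici.mpr hs) (Set.mem_Ici.mpr h0) hgt
      rw [hAt] at this
      linarith [ht.2]
    -- integrability of t ↦ s / √(K₀ - t) on (0, K₀)
    have hint : IntegrableOn (fun t => s / Real.sqrt (K₀ - t)) (Set.Ioo 0 K₀) := by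
      have h1 : IntervalIntegrable (fun x : ℝ => x ^ (-(1/2) : ℝ)) volume 0 K₀ :=
        intervalIntegral.intervalIntegrable_rpow' (by norm_num)
      have h2 := h1.comp_sub_left K₀
      simp only [sub_zero, sub_self] at h2
      have h3 : IntervalIntegrable (fun x : ℝ => (K₀ - x) ^ (-(1/2) : ℝ)) volume 0 K₀ :=
        h2.symm
      have h4 : IntegrableOn (fun x : ℝ => (K₀ - x) ^ (-(1/2) : ℝ)) (Set.Ioo 0 K₀) := by
        have := (intervalIntegrable_iff_integrableOn_Ioo_of_le hK₀.le).mp h3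
        exact this
      have h5 : IntegrableOn (fun x : ℝ => s * (K₀ - x) ^ (-(1/2) : ℝ)) (Set.Ioo 0 K₀) :=
        h4.const_mul s
      apply h5.congr_fun ?_ measurableSet_Ioo
      intro t ht
      have hpos : 0 < K₀ - t := by linarith [ht.2]
      show s * (K₀ - t) ^ (-(1/2) : ℝ) = s / Real.sqrt (K₀ - t)
      rw [Real.rpow_neg hpos.le, ← Real.sqrt_eq_rpow, div_eq_mul_inv]
    have hfin : (∫⁻ t in Set.Ioo (0:ℝ) K₀,
        ENNReal.ofReal (s / Real.sqrt (K₀ - t))) < ⊤ := hint.setLIntegral_lt_top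
    have hle : (∫⁻ t in Set.Ioo (0:ℝ) K₀, ENNReal.ofReal (Ainv t / Real.sqrt (K₀ - t)))
        ≤ ∫⁻ t in Set.Ioo (0:ℝ) K₀, ENNReal.ofReal (s / Real.sqrt (K₀ - t)) := by
      apply setLIntegral_mono' measurableSet_Ioo
      intro t ht
      apply ENNReal.ofReal_le_ofReal
      apply div_le_div_of_nonneg_right (hbound t ht) (Real.sqrt_nonneg _)
    rw [hdiv] at hle
    exact hfin.ne (top_le_iff.mp hle)
  have hbdd : BddAbove (A '' Set.Ici 0) := by
    refine ⟨K₀, ?_⟩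
    rintro x ⟨y, hy, rfl⟩
    exact (hlt y hy).le
  refine ⟨hbdd, le_antisymm ?_ ?_⟩
  · apply csSup_le (Set.Nonempty.image A ⟨0, le_refl 0⟩)
    rintro x ⟨y, hy, rfl⟩
    exact (hlt y hy).le
  · apply le_of_forall_lt
    intro c hc
    set t := max ((c + K₀) / 2) 0 with ht
    have ht0 : 0 ≤ t := le_max_right _ _
    have htK : t < K₀ := by
      apply max_lt <;> linarith
    have hct : c < t := lt_of_lt_of_le (by linarith) (le_max_left _ _)
    obtain ⟨y, hy0, hAy⟩ := hrange t ht0 htK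
    have : t ≤ sSup (A '' Set.Ici 0) := by
      rw [← hAy]
      exact le_csSup hbdd ⟨y, hy0, rfl⟩
    linarith
end

section
/- For every b > 0, R > 1 and ε > 0 there exists α ∈ (0,1] such that sinh(bα)/sinh(b) < sup_{s ≥ 0} 𝒜(s) and ∫_1^R 𝒜⁻¹( sinh(bα)/sinh(b s) ) ds < ε. -/
open MeasureTheory intervalIntegral

/-- For every `b > 0`, `R > 1` and `ε > 0` there exists `α ∈ (0,1]` such that
`sinh(bα)/sinh(b) < sup_{s ≥ 0} 𝒜(s)` (encoded as `∃ s ≥ 0, sinh(bα)/sinh(b) < 𝒜(s)`) and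
`∫_1^R 𝒜⁻¹( sinh(bα)/sinh(b s) ) ds < ε`. -/
theorem stmt_9 (A Ainv : ℝ → ℝ)
    (hA : ContDiffOn ℝ 1 A (Set.Ici 0))
    (hA0 : A 0 = 0)
    (hA' : ∀ s : ℝ, 0 < s → 0 < deriv A s)
    (hAinvL : ∀ s : ℝ, 0 ≤ s → Ainv (A s) = s)
    (hAinvR : ∀ t : ℝ, 0 ≤ t → (∃ s, 0 ≤ s ∧ t < A s) → 0 ≤ Ainv t ∧ A (Ainv t) = t)
    (b R ε : ℝ) (hb : 0 < b) (hR : 1 < R) (hε : 0 < ε) :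
    ∃ α ∈ Set.Ioc (0:ℝ) 1,
      (∃ s, 0 ≤ s ∧ Real.sinh (b * α) / Real.sinh b < A s) ∧
      (∫ s in (1:ℝ)..R, Ainv (Real.sinh (b * α) / Real.sinh (b * s))) < ε := by
  have hR1 : 0 < R - 1 := by linarith
  set s0 : ℝ := min 1 (ε / (2 * (R - 1))) with hs0def
  have hs0 : 0 < s0 := lt_min one_pos (by positivity)
  have hs0ε : s0 * (R - 1) < ε := by
    have h1 : s0 ≤ ε / (2 * (R - 1)) := min_le_right _ _
    have h2 : s0 * (R - 1) ≤ ε / (2 * (R - 1)) * (R - 1) :=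
      mul_le_mul_of_nonneg_right h1 hR1.le
    have h3 : ε / (2 * (R - 1)) * (R - 1) = ε / 2 := by field_simp
    linarith
  -- strict monotonicity of A on [0, ∞)
  have hmono : StrictMonoOn A (Set.Ici 0) := by
    apply strictMonoOn_of_deriv_pos (convex_Ici 0) hA.continuousOn
    intro x hx
    rw [interior_Ici] at hx
    exact hA' x hx
  have hT : 0 < A s0 := by
    have := hmono (Set.self_mem_Ici) (le_of_lt hs0) hs0
    rwa [hA0] at this
  have hsinhb : 0 < Real.sinh b := Real.sinh_pos_iff.mpr hb
  -- choose α via continuity of sinh at 0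
  have hcont : Filter.Tendsto (fun x : ℝ => Real.sinh (b * x)) (nhds 0) (nhds 0) := by
    have : Continuous fun x : ℝ => Real.sinh (b * x) :=
      Real.continuous_sinh.comp (continuous_const.mul continuous_id)
    simpa using this.tendsto 0
  have hnhds : ∀ᶠ x : ℝ in nhds 0, Real.sinh (b * x) < A s0 * Real.sinh b := by
    have : Set.Iio (A s0 * Real.sinh b) ∈ nhds (0:ℝ) :=
      Iio_mem_nhds (by positivity)
    exact hcont this
  obtain ⟨δ, hδ, hball⟩ := Metric.eventually_nhds_iff_ball.mp hnhds
  set α : ℝ := min 1 (δ / 2) with hαdef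
  have hα0 : 0 < α := lt_min one_pos (by positivity)
  have hα1 : α ≤ 1 := min_le_left _ _
  have hαδ : α ∈ Metric.ball (0:ℝ) δ := by
    rw [Metric.mem_ball, Real.dist_eq, sub_zero, abs_of_pos hα0]
    calc α ≤ δ / 2 := min_le_right _ _
    _ < δ := by linarith
  have hsinhα : Real.sinh (b * α) < A s0 * Real.sinh b := hball α hαδ
  have hsinhαpos : 0 < Real.sinh (b * α) := Real.sinh_pos_iff.mpr (by positivity)
  have htα : Real.sinh (b * α) / Real.sinh b < A s0 :=
    (div_lt_iff₀ hsinhb).mpr hsinhα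
  refine ⟨α, ⟨hα0, hα1⟩, ⟨s0, hs0.le, htα⟩, ?_⟩
  -- properties of the integrand
  have hv : ∀ s : ℝ, s ∈ Set.Icc (1:ℝ) R →
      0 ≤ Real.sinh (b * α) / Real.sinh (b * s) ∧
      Real.sinh (b * α) / Real.sinh (b * s) < A s0 := by
    intro s hs
    have hbs : Real.sinh b ≤ Real.sinh (b * s) := by
      rw [Real.sinh_le_sinh]
      nlinarith [hs.1]
    have hbspos : 0 < Real.sinh (b * s) := lt_of_lt_of_le hsinhb hbs
    constructor
    · positivity
    · calc Real.sinh (b * α) / Real.sinh (b * s)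
          ≤ Real.sinh (b * α) / Real.sinh b :=
            div_le_div_of_nonneg_left hsinhαpos.le hsinhb hbs
        _ < A s0 := htα
  have hvA : ∀ s : ℝ, s ∈ Set.Icc (1:ℝ) R →
      0 ≤ Ainv (Real.sinh (b * α) / Real.sinh (b * s)) ∧
      A (Ainv (Real.sinh (b * α) / Real.sinh (b * s))) =
        Real.sinh (b * α) / Real.sinh (b * s) := by
    intro s hs
    exact hAinvR _ (hv s hs).1 ⟨s0, hs0.le, (hv s hs).2⟩
  have hlt : ∀ s : ℝ, s ∈ Set.Icc (1:ℝ) R →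
      Ainv (Real.sinh (b * α) / Real.sinh (b * s)) < s0 := by
    intro s hs
    obtain ⟨h1, h2⟩ := hvA s hs
    by_contra h
    push_neg at h
    have := hmono.le_iff_le (Set.mem_Ici.mpr hs0.le) (Set.mem_Ici.mpr h1)
    have h3 : A s0 ≤ A (Ainv (Real.sinh (b * α) / Real.sinh (b * s))) := this.mpr h
    rw [h2] at h3
    exact absurd ((hv s hs).2) (not_lt.mpr h3)
  -- antitone, hence integrable
  have hanti : AntitoneOn (fun s => Ainv (Real.sinh (b * α) / Real.sinh (b * s)))
      (Set.uIcc (1:ℝ) R) := by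
    rw [Set.uIcc_of_le hR.le]
    intro x hx y hy hxy
    obtain ⟨hx1, hx2⟩ := hvA x hx
    obtain ⟨hy1, hy2⟩ := hvA y hy
    have hvle : Real.sinh (b * α) / Real.sinh (b * y) ≤
        Real.sinh (b * α) / Real.sinh (b * x) := by
      have hbx : Real.sinh b ≤ Real.sinh (b * x) := by
        rw [Real.sinh_le_sinh]; nlinarith [hx.1]
      have hbxpos : 0 < Real.sinh (b * x) := lt_of_lt_of_le hsinhb hbx
      have : Real.sinh (b * x) ≤ Real.sinh (b * y) := by
        rw [Real.sinh_le_sinh]; nlinarith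
      exact div_le_div_of_nonneg_left hsinhαpos.le hbxpos this
    have := (hmono.le_iff_le (Set.mem_Ici.mpr hy1) (Set.mem_Ici.mpr hx1)).mp
      (by rw [hx2, hy2]; exact hvle)
    exact this
  have hint : IntervalIntegrable
      (fun s => Ainv (Real.sinh (b * α) / Real.sinh (b * s))) volume 1 R :=
    hanti.intervalIntegrable
  have hintc : IntervalIntegrable (fun _ : ℝ => s0) volume 1 R :=
    intervalIntegrable_const
  calc (∫ s in (1:ℝ)..R, Ainv (Real.sinh (b * α) / Real.sinh (b * s)))
      ≤ ∫ _ in (1:ℝ)..R, s0 := by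
        apply intervalIntegral.integral_mono_on hR.le hint hintc
        intro s hs
        exact (hlt s hs).le
    _ = (R - 1) * s0 := by rw [intervalIntegral.integral_const]; simp [smul_eq_mul]
    _ < ε := by linarith [hs0ε]
end

section
/- Let b > 0, ρ > 0 and real numbers δ, K with 0 < δ < K. Then there exist α ∈ (0,1] (with sinh(bα)/sinh(b) < sup 𝒜) and real numbers h₀, h₁ with δ < h₁ < h₀ < K/2 + δ/2 such that h₁ = f(ρ+1) and h₀ = f(2ρ+1), where f(r) = δ + ∫_1^r 𝒜⁻¹( sinh(bα)/sinh(b s) ) ds. -/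
open MeasureTheory intervalIntegral

/-- Let `b > 0`, `ρ > 0` and `0 < δ < K`. Then there exist `α ∈ (0,1]` (with
`sinh(bα)/sinh(b) < sup 𝒜`, encoded as `∃ s ≥ 0, sinh(bα)/sinh(b) < 𝒜(s)`) and reals
`h₀, h₁` with `δ < h₁ < h₀ < K/2 + δ/2` such that `h₁ = f(ρ+1)` and `h₀ = f(2ρ+1)`, where
`f(r) = δ + ∫_1^r 𝒜⁻¹( sinh(bα)/sinh(b s) ) ds`. -/
theorem stmt_10 (A Ainv : ℝ → ℝ)
    (hA : ContDiffOn ℝ 1 A (Set.Ici 0))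
    (hA0 : A 0 = 0)
    (hA' : ∀ s : ℝ, 0 < s → 0 < deriv A s)
    (hAinvL : ∀ s : ℝ, 0 ≤ s → Ainv (A s) = s)
    (hAinvR : ∀ t : ℝ, 0 ≤ t → (∃ s, 0 ≤ s ∧ t < A s) → 0 ≤ Ainv t ∧ A (Ainv t) = t)
    (b ρ δ K : ℝ) (hb : 0 < b) (hρ : 0 < ρ) (hδ : 0 < δ) (hδK : δ < K) :
    ∃ α ∈ Set.Ioc (0:ℝ) 1,
      (∃ s, 0 ≤ s ∧ Real.sinh (b * α) / Real.sinh b < A s) ∧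
      ∃ h₀ h₁ : ℝ,
        δ < h₁ ∧ h₁ < h₀ ∧ h₀ < K / 2 + δ / 2 ∧
        h₁ = δ + ∫ s in (1:ℝ)..(ρ + 1), Ainv (Real.sinh (b * α) / Real.sinh (b * s)) ∧
        h₀ = δ + ∫ s in (1:ℝ)..(2 * ρ + 1), Ainv (Real.sinh (b * α) / Real.sinh (b * s)) := by
  have hsb : 0 < Real.sinh b := Real.sinh_pos_iff.mpr hb
  -- strict monotonicity of A
  have hmono : StrictMonoOn A (Set.Ici 0) := by
    apply strictMonoOn_of_deriv_pos (convex_Ici 0) hA.continuousOn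
    intro x hx
    rw [interior_Ici] at hx
    exact hA' x hx
  set c : ℝ := (K - δ) / (8 * ρ) with hc
  have hcpos : 0 < c := div_pos (by linarith) (by linarith)
  have hAcpos : 0 < A c := by
    have := hmono (Set.mem_Ici.mpr le_rfl) (Set.mem_Ici.mpr hcpos.le) hcpos
    rwa [hA0] at this
  -- choose α small via continuity of sinh at 0
  have hcont : ContinuousAt Real.sinh 0 := Real.continuous_sinh.continuousAt
  rw [Metric.continuousAt_iff] at hcont
  obtain ⟨η, hη, hηs⟩ := hcont (A c * Real.sinh b) (mul_pos hAcpos hsb)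
  set α : ℝ := min 1 (η / (2 * b)) with hα
  have hαpos : 0 < α := lt_min one_pos (div_pos hη (by linarith))
  have hα1 : α ≤ 1 := min_le_left _ _
  have hbα : 0 < b * α := mul_pos hb hαpos
  have hsinhbα : 0 ≤ Real.sinh (b * α) := (Real.sinh_pos_iff.mpr hbα).le
  have hsmall : Real.sinh (b * α) < A c * Real.sinh b := by
    have h1 : b * α ≤ η / 2 := by
      have : α ≤ η / (2 * b) := min_le_right _ _
      calc b * α ≤ b * (η / (2 * b)) := by nlinarith
        _ = η / 2 := by field_simp
    have := hηs (x := b * α) (by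
      rw [Real.dist_eq, sub_zero, abs_of_pos hbα]
      linarith)
    rw [Real.dist_eq, Real.sinh_zero, sub_zero] at this
    calc Real.sinh (b * α) ≤ |Real.sinh (b * α)| := le_abs_self _
      _ < A c * Real.sinh b := this
  have ht₀ : Real.sinh (b * α) / Real.sinh b < A c := by
    rw [div_lt_iff₀ hsb]; exact hsmall
  -- the integrand
  set g : ℝ → ℝ := fun s => Ainv (Real.sinh (b * α) / Real.sinh (b * s)) with hg
  have hts : ∀ s : ℝ, 1 ≤ s → 0 ≤ Real.sinh (b * α) / Real.sinh (b * s) ∧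
      Real.sinh (b * α) / Real.sinh (b * s) < A c ∧
      0 < Real.sinh (b * α) / Real.sinh (b * s) := by
    intro s hs
    have hbs : 0 < Real.sinh (b * s) := Real.sinh_pos_iff.mpr (by nlinarith)
    have hbb : Real.sinh b ≤ Real.sinh (b * s) := by
      apply Real.sinh_le_sinh.mpr; nlinarith
    have hpos : 0 < Real.sinh (b * α) / Real.sinh (b * s) :=
      div_pos (Real.sinh_pos_iff.mpr hbα) hbs
    refine ⟨hpos.le, ?_, hpos⟩
    calc Real.sinh (b * α) / Real.sinh (b * s) ≤ Real.sinh (b * α) / Real.sinh b :=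
          div_le_div_of_nonneg_left hsinhbα hsb hbb
      _ < A c := ht₀
  have hgs : ∀ s : ℝ, 1 ≤ s → 0 < g s ∧ g s < c ∧ A (g s) = Real.sinh (b * α) / Real.sinh (b * s) := by
    intro s hs
    obtain ⟨h0, hlt, hpos⟩ := hts s hs
    obtain ⟨hinv0, hinveq⟩ := hAinvR _ h0 ⟨c, hcpos.le, hlt⟩
    refine ⟨?_, ?_, hinveq⟩
    · by_contra h
      push_neg at h
      have hz : g s = 0 := le_antisymm h hinv0
      rw [hg] at hz
      simp only at hz
      rw [hz, hA0] at hinveq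
      linarith
    · have := (hmono.lt_iff_lt (Set.mem_Ici.mpr hinv0) (Set.mem_Ici.mpr hcpos.le)).mp
        (by rw [hinveq]; exact hlt)
      exact this
  -- antitonicity of g on [1, ∞)
  have hanti : AntitoneOn g (Set.Ici 1) := by
    intro s hs s' hs' hss'
    have h1 := hgs s hs
    have h2 := hgs s' hs'
    have hle : Real.sinh (b * α) / Real.sinh (b * s') ≤ Real.sinh (b * α) / Real.sinh (b * s) := by
      apply div_le_div_of_nonneg_left hsinhbα (Real.sinh_pos_iff.mpr (by nlinarith [Set.mem_Ici.mp hs]))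
      apply Real.sinh_le_sinh.mpr
      nlinarith [Set.mem_Ici.mp hs]
    exact (hmono.le_iff_le (Set.mem_Ici.mpr h2.1.le) (Set.mem_Ici.mpr h1.1.le)).mp
      (by rw [h1.2.2, h2.2.2]; exact hle)
  have hmem : ∀ a b' : ℝ, 1 ≤ a → Set.uIcc a b' ⊆ Set.Ici 1 → True := fun _ _ _ _ => trivial
  have hint : ∀ a b' : ℝ, (1:ℝ) ≤ a → a ≤ b' → IntervalIntegrable g volume a b' := by
    intro a b' ha hab
    apply AntitoneOn.intervalIntegrable
    apply hanti.mono
    rw [Set.uIcc_of_le hab]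
    intro x hx
    exact le_trans ha hx.1
  have hρ1 : (1:ℝ) ≤ ρ + 1 := by linarith
  have hρ2 : (1:ℝ) ≤ 2 * ρ + 1 := by linarith
  have hρ12 : ρ + 1 ≤ 2 * ρ + 1 := by linarith
  have hint1 := hint 1 (ρ + 1) le_rfl hρ1
  have hint2 := hint 1 (2 * ρ + 1) le_rfl hρ2
  have hint3 := hint (ρ + 1) (2 * ρ + 1) hρ1 hρ12
  set m : ℝ := g (2 * ρ + 1) with hm
  have hmpos : 0 < m := (hgs _ hρ2).1
  have hgm : ∀ s ∈ Set.Icc (1:ℝ) (2 * ρ + 1), m ≤ g s := by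
    intro s hs
    exact hanti (Set.mem_Ici.mpr hs.1) (Set.mem_Ici.mpr hρ2) hs.2
  have hgc : ∀ s ∈ Set.Icc (1:ℝ) (2 * ρ + 1), g s ≤ c := by
    intro s hs
    exact ((hgs s hs.1).2.1).le
  -- lower bound on ∫_1^{ρ+1}
  have hI1 : ρ * m ≤ ∫ s in (1:ℝ)..(ρ + 1), g s := by
    have := intervalIntegral.integral_mono_on hρ1 (intervalIntegrable_const) hint1
      (fun s hs => hgm s ⟨hs.1, le_trans hs.2 hρ12⟩)
    rwa [intervalIntegral.integral_const, smul_eq_mul, show ρ + 1 - 1 = ρ by ring] at this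
  -- lower bound on ∫_{ρ+1}^{2ρ+1}
  have hI3 : ρ * m ≤ ∫ s in (ρ + 1)..(2 * ρ + 1), g s := by
    have := intervalIntegral.integral_mono_on hρ12 (intervalIntegrable_const) hint3
      (fun s hs => hgm s ⟨le_trans hρ1 hs.1, hs.2⟩)
    rwa [intervalIntegral.integral_const, smul_eq_mul,
      show 2 * ρ + 1 - (ρ + 1) = ρ by ring] at this
  -- upper bound on ∫_1^{2ρ+1}
  have hI2 : (∫ s in (1:ℝ)..(2 * ρ + 1), g s) ≤ 2 * ρ * c := by
    have := intervalIntegral.integral_mono_on hρ2 hint2 (intervalIntegrable_const) hgc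
    rwa [intervalIntegral.integral_const, smul_eq_mul,
      show 2 * ρ + 1 - 1 = 2 * ρ by ring] at this
  have hsplit : (∫ s in (1:ℝ)..(ρ + 1), g s) + (∫ s in (ρ + 1)..(2 * ρ + 1), g s)
      = ∫ s in (1:ℝ)..(2 * ρ + 1), g s :=
    intervalIntegral.integral_add_adjacent_intervals hint1 hint3
  refine ⟨α, ⟨hαpos, hα1⟩, ⟨c, hcpos.le, ht₀⟩,
    δ + ∫ s in (1:ℝ)..(2 * ρ + 1), g s, δ + ∫ s in (1:ℝ)..(ρ + 1), g s,
    ?_, ?_, ?_, rfl, rfl⟩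
  · nlinarith
  · nlinarith
  · have : 2 * ρ * c = (K - δ) / 4 := by
      rw [hc]; field_simp; ring
    nlinarith
end

section
/- Let n ≥ 2 be an integer, α ∈ (0,1], δ ∈ ℝ, and assume (sinh(α)/sinh(1))^{n-1} < sup_{s ≥ 0} 𝒜(s). Define f(r) = δ + ∫_1^r 𝒜⁻¹( (sinh α)^{n-1}/(sinh s)^{n-1} ) ds for r ≥ 1. Then f is continuously differentiable on [1,∞) and twice continuously differentiable on (1,∞), f(1) = δ, f'(r) = 𝒜⁻¹( (sinh α)^{n-1}/(sinh r)^{n-1} ) > 0 (so f is strictly increasing), and f satisfies the ordinary differential equation 𝒜'(f'(r))·f''(r) + (n-1)·coth(r)·𝒜(f'(r)) = 0 for all r > 1. -/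
open MeasureTheory intervalIntegral

/-- Let `n ≥ 2`, `α ∈ (0,1]`, `δ ∈ ℝ`, and assume
`(sinh(α)/sinh(1))^{n-1} < sup_{s ≥ 0} 𝒜(s)` (encoded as an existential). Define
`f(r) = δ + ∫_1^r 𝒜⁻¹( (sinh α)^{n-1}/(sinh s)^{n-1} ) ds` for `r ≥ 1`. Then `f` is C¹ on
`[1,∞)` and C² on `(1,∞)`, `f(1) = δ`, `f'(r) = 𝒜⁻¹( (sinh α)^{n-1}/(sinh r)^{n-1} ) > 0`
(so `f` is strictly increasing), and `𝒜'(f'(r))·f''(r) + (n-1)·coth(r)·𝒜(f'(r)) = 0` for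
all `r > 1`. -/
theorem stmt_11 (A Ainv : ℝ → ℝ)
    (hA : ContDiffOn ℝ 1 A (Set.Ici 0))
    (hA0 : A 0 = 0)
    (hA' : ∀ s : ℝ, 0 < s → 0 < deriv A s)
    (hAinvL : ∀ s : ℝ, 0 ≤ s → Ainv (A s) = s)
    (hAinvR : ∀ t : ℝ, 0 ≤ t → (∃ s, 0 ≤ s ∧ t < A s) → 0 ≤ Ainv t ∧ A (Ainv t) = t)
    (n : ℕ) (hn : 2 ≤ n) (α δ : ℝ) (hα : α ∈ Set.Ioc (0:ℝ) 1)
    (hsup : ∃ s, 0 ≤ s ∧ (Real.sinh α / Real.sinh 1) ^ (n - 1) < A s)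
    (f : ℝ → ℝ)
    (hf : ∀ r : ℝ,
      f r = δ + ∫ s in (1:ℝ)..r, Ainv (Real.sinh α ^ (n - 1) / Real.sinh s ^ (n - 1))) :
    ContDiffOn ℝ 1 f (Set.Ici 1) ∧
    ContDiffOn ℝ 2 f (Set.Ioi 1) ∧
    f 1 = δ ∧
    (∀ r : ℝ, 1 ≤ r →
      derivWithin f (Set.Ici 1) r = Ainv (Real.sinh α ^ (n - 1) / Real.sinh r ^ (n - 1)) ∧
      0 < derivWithin f (Set.Ici 1) r) ∧
    StrictMonoOn f (Set.Ici 1) ∧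
    (∀ r : ℝ, 1 < r →
      deriv A (deriv f r) * deriv (deriv f) r +
        ((n : ℝ) - 1) * (Real.cosh r / Real.sinh r) * A (deriv f r) = 0) := by
  obtain ⟨hα0, hα1⟩ := hα
  obtain ⟨s0, hs0, hs0lt⟩ := hsup
  set m := n - 1 with hm_def
  have hm1 : 1 ≤ m := by omega
  set c := Real.sinh α ^ m with hc_def
  set h : ℝ → ℝ := fun s => c / Real.sinh s ^ m with hh_def
  set g : ℝ → ℝ := fun s => Ainv (h s) with hg_def
  obtain rfl : f = fun x => δ + ∫ s in (1:ℝ)..x, g s := funext hf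
  clear hf
  have hsinh1 : (0:ℝ) < Real.sinh 1 := Real.sinh_pos_iff.2 one_pos
  have hsinhα : (0:ℝ) < Real.sinh α := Real.sinh_pos_iff.2 hα0
  have hc0 : 0 < c := pow_pos hsinhα m
  -- A is strictly monotone on [0,∞)
  have hAmono : StrictMonoOn A (Set.Ici 0) := by
    apply strictMonoOn_of_deriv_pos (convex_Ici 0) hA.continuousOn
    intro x hx
    rw [interior_Ici] at hx
    exact hA' x hx
  -- basic properties of Ainv on (0, A s0)
  have hrange : ∀ t ∈ Set.Ioo (0:ℝ) (A s0), 0 < Ainv t ∧ A (Ainv t) = t := by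
    intro t ht
    obtain ⟨h1, h2⟩ := hAinvR t ht.1.le ⟨s0, hs0, ht.2⟩
    rcases h1.lt_or_eq with h1' | h1'
    · exact ⟨h1', h2⟩
    · exfalso; rw [← h1', hA0] at h2; exact absurd h2.symm ht.1.ne'
  -- continuity of Ainv on (0, A s0)
  have hcont : ∀ t ∈ Set.Ioo (0:ℝ) (A s0), ContinuousAt Ainv t := by
    intro t ht
    have hIoo : Set.Ioo (0:ℝ) (A s0) ∈ nhds t := isOpen_Ioo.mem_nhds ht
    rw [ContinuousAt]
    apply tendsto_order.2
    constructor
    · intro a ha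
      rcases lt_or_ge a 0 with ha0 | ha0
      · filter_upwards [hIoo] with y hy
        exact lt_of_lt_of_le ha0 (hrange y hy).1.le
      · have hAa : A a < t := by
          rw [← (hrange t ht).2]
          exact hAmono ha0 (hrange t ht).1.le ha
        filter_upwards [hIoo, eventually_gt_nhds hAa] with y hy hy2
        by_contra hle
        push_neg at hle
        have : A (Ainv y) ≤ A a :=
          hAmono.monotoneOn (hrange y hy).1.le ha0 hle
        rw [(hrange y hy).2] at this
        exact absurd hy2 (not_lt.2 this)
    · intro b hb
      have hb0 : 0 ≤ b := le_trans (hrange t ht).1.le hb.le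
      have hAb : t < A b := by
        rw [← (hrange t ht).2]
        exact hAmono (hrange t ht).1.le hb0 hb
      filter_upwards [hIoo, eventually_lt_nhds hAb] with y hy hy2
      by_contra hle
      push_neg at hle
      have : A b ≤ A (Ainv y) :=
        hAmono.monotoneOn hb0 (hrange y hy).1.le hle
      rw [(hrange y hy).2] at this
      exact absurd hy2 (not_lt.2 this)
  -- differentiability of Ainv on (0, A s0)
  have hderivAinv : ∀ t ∈ Set.Ioo (0:ℝ) (A s0),
      HasDerivAt Ainv (deriv A (Ainv t))⁻¹ t := by
    intro t ht
    have hpos := (hrange t ht).1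
    have hdiff : DifferentiableAt ℝ A (Ainv t) :=
      (hA.differentiableOn one_ne_zero).differentiableAt (Ici_mem_nhds hpos)
    refine HasDerivAt.of_local_left_inverse (hcont t ht) hdiff.hasDerivAt
      (ne_of_gt (hA' _ hpos)) ?_
    filter_upwards [isOpen_Ioo.mem_nhds ht] with y hy
    exact (hrange y hy).2
  -- properties of h
  have hsinhr : ∀ r : ℝ, 1 ≤ r → 0 < Real.sinh r := fun r hr =>
    Real.sinh_pos_iff.2 (by linarith)
  have hhmem : ∀ r : ℝ, 1 ≤ r → h r ∈ Set.Ioo (0:ℝ) (A s0) := by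
    intro r hr
    have hsr := hsinhr r hr
    constructor
    · exact div_pos hc0 (pow_pos hsr m)
    · have h1 : Real.sinh 1 ^ m ≤ Real.sinh r ^ m :=
        pow_le_pow_left₀ hsinh1.le (Real.sinh_le_sinh.2 hr) m
      have h2 : h r ≤ c / Real.sinh 1 ^ m :=
        div_le_div_of_nonneg_left hc0.le (pow_pos hsinh1 m) h1
      calc h r ≤ c / Real.sinh 1 ^ m := h2
        _ = (Real.sinh α / Real.sinh 1) ^ m := by rw [div_pow]
        _ < A s0 := hs0lt
  have hhderiv : ∀ r : ℝ, 1 ≤ r →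
      HasDerivAt h (-(m:ℝ) * (Real.cosh r / Real.sinh r) * h r) r := by
    intro r hr
    have hsr := hsinhr r hr
    have hpow : HasDerivAt (fun x => Real.sinh x ^ m)
        ((m:ℝ) * Real.sinh r ^ (m - 1) * Real.cosh r) r :=
      (Real.hasDerivAt_sinh r).pow m
    have hne : Real.sinh r ^ m ≠ 0 := (pow_pos hsr m).ne'
    have := ((hasDerivAt_const r c).div hpow hne : HasDerivAt h _ r)
    refine this.congr_deriv ?_
    have hpm : Real.sinh r ^ (m - 1) * Real.sinh r = Real.sinh r ^ m := by
      rw [← pow_succ]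
      congr 1
      omega
    show _ = -(m:ℝ) * (Real.cosh r / Real.sinh r) * (c / Real.sinh r ^ m)
    have hs0' : Real.sinh r ≠ 0 := hsr.ne'
    rw [← hpm]
    field_simp
    ring
  have hhcont : ∀ r : ℝ, 1 ≤ r → ContinuousAt h r := fun r hr =>
    (hhderiv r hr).differentiableAt.continuousAt
  -- properties of g
  have hgpos : ∀ r : ℝ, 1 ≤ r → 0 < g r := fun r hr => (hrange _ (hhmem r hr)).1
  have hAg : ∀ r : ℝ, 1 ≤ r → A (g r) = h r := fun r hr => (hrange _ (hhmem r hr)).2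
  have hgcontAt : ∀ r : ℝ, 1 ≤ r → ContinuousAt g r := fun r hr =>
    (hcont _ (hhmem r hr)).comp (hhcont r hr)
  have hgcont : ContinuousOn g (Set.Ici 1) := fun r hr =>
    (hgcontAt r hr).continuousWithinAt
  have hgderiv : ∀ r : ℝ, 1 ≤ r →
      HasDerivAt g ((deriv A (g r))⁻¹ * (-(m:ℝ) * (Real.cosh r / Real.sinh r) * h r)) r :=
    fun r hr => (hderivAinv _ (hhmem r hr)).comp r (hhderiv r hr)
  -- integrability
  have hInt : ∀ r : ℝ, 1 ≤ r → IntervalIntegrable g volume 1 r := by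
    intro r hr
    apply ContinuousOn.intervalIntegrable
    apply hgcont.mono
    rw [Set.uIcc_of_le hr]
    exact Set.Icc_subset_Ici_self
  -- derivatives of f
  have hfd : ∀ r : ℝ, 1 < r → HasDerivAt
      (fun x => δ + ∫ s in (1:ℝ)..x, g s) (g r) r := by
    intro r hr
    have hmeas : StronglyMeasurableAtFilter g (nhds r) volume :=
      ⟨Set.Ici 1, Ici_mem_nhds hr, hgcont.aestronglyMeasurable measurableSet_Ici⟩
    have := intervalIntegral.integral_hasDerivAt_right (hInt r hr.le)
      hmeas (hgcontAt r hr.le)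
    exact this.const_add δ
  have hfdw : ∀ r : ℝ, 1 ≤ r → HasDerivWithinAt
      (fun x => δ + ∫ s in (1:ℝ)..x, g s) (g r) (Set.Ici 1) r := by
    intro r hr
    rcases hr.eq_or_lt with rfl | hr'
    · have := intervalIntegral.integral_hasDerivWithinAt_right (s := Set.Ici (1:ℝ))
        (t := Set.Ioi (1:ℝ)) (hInt 1 le_rfl)
        ⟨Set.Ioi 1, self_mem_nhdsWithin,
          (hgcont.mono Set.Ioi_subset_Ici_self).aestronglyMeasurable measurableSet_Ioi⟩
        ((hgcont 1 Set.self_mem_Ici).mono Set.Ioi_subset_Ici_self)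
      exact this.const_add δ
    · exact (hfd r hr').hasDerivWithinAt
  have hdw : ∀ r : ℝ, 1 ≤ r →
      derivWithin (fun x => δ + ∫ s in (1:ℝ)..x, g s) (Set.Ici 1) r = g r :=
    fun r hr => (hfdw r hr).derivWithin (uniqueDiffOn_Ici 1 r hr)
  have hd : ∀ r : ℝ, 1 < r →
      deriv (fun x => δ + ∫ s in (1:ℝ)..x, g s) r = g r :=
    fun r hr => (hfd r hr).deriv
  -- C¹ on [1, ∞)
  have hC1 : ContDiffOn ℝ 1 (fun x => δ + ∫ s in (1:ℝ)..x, g s) (Set.Ici 1) := by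
    rw [show (1 : WithTop ℕ∞) = 0 + 1 from (zero_add 1).symm,
      contDiffOn_succ_iff_derivWithin (uniqueDiffOn_Ici 1)]
    refine ⟨fun r hr => (hfdw r hr).differentiableWithinAt, by simp, ?_⟩
    rw [contDiffOn_zero]
    exact hgcont.congr hdw
  -- continuity of deriv A on (0,∞)
  have hContDerivA : ContinuousOn (deriv A) (Set.Ioi 0) := by
    have h1 : ContinuousOn (derivWithin A (Set.Ici 0)) (Set.Ici 0) :=
      hA.continuousOn_derivWithin (uniqueDiffOn_Ici 0) le_rfl
    apply (h1.mono Set.Ioi_subset_Ici_self).congr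
    intro s hs
    exact (derivWithin_of_mem_nhds (Ici_mem_nhds hs)).symm
  -- C¹ of g on (1,∞)
  have hgC1 : ContDiffOn ℝ 1 g (Set.Ioi 1) := by
    rw [show (1 : WithTop ℕ∞) = 0 + 1 from (zero_add 1).symm,
      contDiffOn_succ_iff_deriv_of_isOpen isOpen_Ioi]
    refine ⟨fun r hr => ((hgderiv r (le_of_lt hr)).differentiableAt).differentiableWithinAt,
      by simp, ?_⟩
    rw [contDiffOn_zero]
    have hGcont : ContinuousOn
        (fun r => (deriv A (g r))⁻¹ * (-(m:ℝ) * (Real.cosh r / Real.sinh r) * h r))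
        (Set.Ioi 1) := by
      have hg' : ContinuousOn g (Set.Ioi 1) := hgcont.mono Set.Ioi_subset_Ici_self
      have h1 : ContinuousOn (fun r => deriv A (g r)) (Set.Ioi 1) :=
        hContDerivA.comp hg' (fun r hr => hgpos r (le_of_lt hr))
      have h2 : ContinuousOn (fun r => (deriv A (g r))⁻¹) (Set.Ioi 1) :=
        h1.inv₀ (fun r hr => (hA' _ (hgpos r (le_of_lt hr))).ne')
      have h3 : ContinuousOn h (Set.Ioi 1) := fun r hr =>
        (hhcont r (le_of_lt hr)).continuousWithinAt
      have h4 : ContinuousOn (fun r => Real.cosh r / Real.sinh r) (Set.Ioi 1) :=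
        ContinuousOn.div Real.continuous_cosh.continuousOn
          Real.continuous_sinh.continuousOn
          (fun r hr => (hsinhr r (le_of_lt hr)).ne')
      exact h2.mul ((continuousOn_const.mul h4).mul h3)
    apply hGcont.congr
    intro r hr
    exact (hgderiv r (le_of_lt hr)).deriv
  -- C² on (1,∞)
  have hC2 : ContDiffOn ℝ 2 (fun x => δ + ∫ s in (1:ℝ)..x, g s) (Set.Ioi 1) := by
    rw [show (2 : WithTop ℕ∞) = 1 + 1 from by norm_num,
      contDiffOn_succ_iff_deriv_of_isOpen isOpen_Ioi]
    refine ⟨fun r hr => (hfd r hr).differentiableAt.differentiableWithinAt, by simp, ?_⟩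
    exact hgC1.congr hd
  refine ⟨hC1, hC2, ?_, ?_, ?_, ?_⟩
  · simp
  · intro r hr
    rw [hdw r hr]
    exact ⟨rfl, hgpos r hr⟩
  · apply strictMonoOn_of_deriv_pos (convex_Ici 1) hC1.continuousOn
    intro r hr
    rw [interior_Ici] at hr
    rw [hd r hr]
    exact hgpos r hr.le
  · intro r hr
    have h1 : deriv (fun x => δ + ∫ s in (1:ℝ)..x, g s) r = g r := hd r hr
    have h2 : deriv (deriv (fun x => δ + ∫ s in (1:ℝ)..x, g s)) r = deriv g r := by
      apply Filter.EventuallyEq.deriv_eq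
      filter_upwards [Ioi_mem_nhds hr] with y hy
      exact hd y hy
    have hgd := hgderiv r hr.le
    have hAd : HasDerivAt A (deriv A (g r)) (g r) :=
      ((hA.differentiableOn one_ne_zero).differentiableAt
        (Ici_mem_nhds (hgpos r hr.le))).hasDerivAt
    have hcomp : HasDerivAt (fun s => A (g s))
        (deriv A (g r) * ((deriv A (g r))⁻¹ * (-(m:ℝ) * (Real.cosh r / Real.sinh r) * h r)))
        r := hAd.comp r hgd
    have hev : (fun s => A (g s)) =ᶠ[nhds r] h := by
      filter_upwards [Ioi_mem_nhds hr] with y hy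
      exact hAg y hy.le
    have hcomp' : HasDerivAt h
        (deriv A (g r) * ((deriv A (g r))⁻¹ * (-(m:ℝ) * (Real.cosh r / Real.sinh r) * h r)))
        r := hcomp.congr_of_eventuallyEq hev.symm
    have huniq := hcomp'.unique (hhderiv r hr.le)
    rw [h1, h2, hgd.deriv, hAg r hr.le, huniq]
    have hcast : ((n:ℝ) - 1) = (m:ℝ) := by
      rw [hm_def]
      push_cast [Nat.cast_sub (by omega : 1 ≤ n)]
      ring
    rw [hcast]
    ring
end

section
/- Let n ≥ 2 be an integer and a > 0; assume moreover that 𝒜 is bounded and set K₀ := sup_{s ≥ 0} 𝒜(s). Then for every d > 0 the Lebesgue integral J(d) = ∫_d^∞ 𝒜⁻¹( K₀·(cosh(a t))^{-(n-1)} ) dt is finite, and J(d) → 0 as d → +∞. -/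
open MeasureTheory

/-- Let `n ≥ 2`, `a > 0`; assume 𝒜 is bounded and set
`K₀ := sup_{s ≥ 0} 𝒜(s)`. Then for every `d > 0` the Lebesgue integral
`J(d) = ∫_d^∞ 𝒜⁻¹( K₀·(cosh(a t))^{-(n-1)} ) dt` is finite, and `J(d) → 0` as `d → +∞`. -/
theorem stmt_12 (A Ainv : ℝ → ℝ)
    (hA : ContDiffOn ℝ 1 A (Set.Ici 0))
    (hA0 : A 0 = 0)
    (hA' : ∀ s : ℝ, 0 < s → 0 < deriv A s)
    (q δ₀ D : ℝ) (hq : 0 < q) (hδ₀ : 0 < δ₀) (hD : 0 < D)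
    (hgrowth : ∀ s ∈ Set.Icc (0:ℝ) δ₀, D * s ^ q ≤ A s)
    (hbdd : BddAbove (A '' Set.Ici 0))
    (K₀ : ℝ) (hK₀ : K₀ = sSup (A '' Set.Ici 0))
    (hAinvL : ∀ s : ℝ, 0 ≤ s → Ainv (A s) = s)
    (hAinvR : ∀ t : ℝ, 0 ≤ t → t < K₀ → 0 ≤ Ainv t ∧ A (Ainv t) = t)
    (n : ℕ) (hn : 2 ≤ n) (a : ℝ) (ha : 0 < a) :
    (∀ d : ℝ, 0 < d →
      MeasureTheory.IntegrableOn (fun t => Ainv (K₀ / Real.cosh (a * t) ^ (n - 1)))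
        (Set.Ioi d)) ∧
    Filter.Tendsto (fun d => ∫ t in Set.Ioi d, Ainv (K₀ / Real.cosh (a * t) ^ (n - 1)))
      Filter.atTop (nhds 0) := by
  set g : ℝ → ℝ := fun t => Ainv (K₀ / Real.cosh (a * t) ^ (n - 1)) with hgdef
  set y : ℝ → ℝ := fun t => K₀ / Real.cosh (a * t) ^ (n - 1) with hydef
  have hn1 : n - 1 ≠ 0 := by omega
  -- monotonicity of A
  have hcont : ContinuousOn A (Set.Ici 0) := hA.continuousOn
  have hmono : StrictMonoOn A (Set.Ici 0) := by
    apply strictMonoOn_of_deriv_pos (convex_Ici 0) hcont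
    intro x hx
    rw [interior_Ici] at hx
    exact hA' x hx
  have hAδpos : 0 < A δ₀ := by
    have := hmono Set.self_mem_Ici (Set.mem_Ici.2 hδ₀.le) hδ₀
    rwa [hA0] at this
  have hleK : ∀ s : ℝ, 0 ≤ s → A s ≤ K₀ := fun s hs =>
    hK₀ ▸ le_csSup hbdd ⟨s, hs, rfl⟩
  have hAδK : A δ₀ < K₀ :=
    lt_of_lt_of_le (hmono (Set.mem_Ici.2 hδ₀.le) (Set.mem_Ici.2 (by linarith))
      (by linarith : δ₀ < δ₀ + 1)) (hleK _ (by linarith))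
  have hK₀pos : 0 < K₀ := lt_trans hAδpos hAδK
  -- basic facts about y
  have hy_pos : ∀ t : ℝ, 0 < t → 0 < y t := by
    intro t ht
    have : (0:ℝ) < Real.cosh (a * t) ^ (n - 1) :=
      pow_pos (Real.cosh_pos _) _
    exact div_pos hK₀pos this
  have hy_lt : ∀ t : ℝ, 0 < t → y t < K₀ := by
    intro t ht
    have hch : 1 < Real.cosh (a * t) :=
      Real.one_lt_cosh.2 (ne_of_gt (mul_pos ha ht))
    have : 1 < Real.cosh (a * t) ^ (n - 1) := one_lt_pow₀ hch hn1
    exact div_lt_self hK₀pos this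
  have hy_exp : ∀ t : ℝ, 0 < t → y t ≤ 2 * K₀ * Real.exp (-(a * t)) := by
    intro t ht
    have hch : Real.exp (a * t) / 2 ≤ Real.cosh (a * t) := by
      rw [Real.cosh_eq]
      have := Real.exp_pos (-(a * t))
      linarith
    have hpow : Real.cosh (a * t) ≤ Real.cosh (a * t) ^ (n - 1) :=
      le_self_pow₀ (Real.one_le_cosh _) hn1
    have h1 : Real.exp (a * t) / 2 ≤ Real.cosh (a * t) ^ (n - 1) :=
      le_trans hch hpow
    have h2 : y t ≤ K₀ / (Real.exp (a * t) / 2) := by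
      apply div_le_div_of_nonneg_left hK₀pos.le _ h1
      positivity
    have h3 : K₀ / (Real.exp (a * t) / 2) = 2 * K₀ * Real.exp (-(a * t)) := by
      rw [Real.exp_neg]
      field_simp
    linarith [h2, h3.le]
  -- facts about g
  have hg_fact : ∀ t : ℝ, 0 < t → 0 ≤ g t ∧ A (g t) = y t := fun t ht =>
    hAinvR (y t) (hy_pos t ht).le (hy_lt t ht)
  have hanti : AntitoneOn g (Set.Ioi 0) := by
    intro t1 ht1 t2 ht2 h12
    have hy12 : y t2 ≤ y t1 := by
      apply div_le_div_of_nonneg_left hK₀pos.le (pow_pos (Real.cosh_pos _) _)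
      apply pow_le_pow_left₀ (Real.cosh_pos _).le
      rw [Real.cosh_le_cosh]
      rw [abs_of_pos (mul_pos ha ht1), abs_of_pos (mul_pos ha (lt_of_lt_of_le ht1 h12))]
      exact mul_le_mul_of_nonneg_left h12 ha.le
    obtain ⟨hg1, hA1⟩ := hg_fact t1 ht1
    obtain ⟨hg2, hA2⟩ := hg_fact t2 (lt_of_lt_of_le ht1 h12)
    have : A (g t2) ≤ A (g t1) := by rw [hA1, hA2]; exact hy12
    exact (hmono.le_iff_le (Set.mem_Ici.2 hg2) (Set.mem_Ici.2 hg1)).1 this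
  -- key rpow estimate
  have hkey : ∀ y' : ℝ, 0 < y' → y' ≤ A δ₀ → Ainv y' ≤ (y' / D) ^ (1 / q) := by
    intro y' hy'pos hy'le
    obtain ⟨hs0, hAs⟩ := hAinvR y' hy'pos.le (lt_of_le_of_lt hy'le hAδK)
    set s := Ainv y' with hs
    have hsδ : s ≤ δ₀ := by
      by_contra h
      push_neg at h
      have := hmono (Set.mem_Ici.2 hδ₀.le) (Set.mem_Ici.2 hs0) h
      rw [hAs] at this
      linarith
    have hgr := hgrowth s ⟨hs0, hsδ⟩
    rw [hAs] at hgr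
    have h1 : s ^ q ≤ y' / D := (le_div_iff₀' hD).2 hgr
    have h2 : (s ^ q) ^ (1 / q) ≤ (y' / D) ^ (1 / q) :=
      Real.rpow_le_rpow (Real.rpow_nonneg hs0 q) h1 (by positivity)
    rwa [← Real.rpow_mul hs0, mul_one_div_cancel (ne_of_gt hq), Real.rpow_one] at h2
  set c : ℝ := a / q with hcdef
  have hc : 0 < c := div_pos ha hq
  set C : ℝ := (2 * K₀ / D) ^ (1 / q) with hCdef
  have hC0 : 0 ≤ C := Real.rpow_nonneg (by positivity) _
  -- exponential bound for large t
  have hCexp : ∀ t : ℝ, 0 < t → 2 * K₀ * Real.exp (-(a * t)) ≤ A δ₀ →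
      g t ≤ C * Real.exp (-(c * t)) := by
    intro t ht hsmall
    have hy1 := hy_pos t ht
    have hy2 := hy_exp t ht
    have h1 : g t ≤ (y t / D) ^ (1 / q) := hkey (y t) hy1 (le_trans hy2 hsmall)
    have h2 : (y t / D) ^ (1 / q) ≤ (2 * K₀ * Real.exp (-(a * t)) / D) ^ (1 / q) :=
      Real.rpow_le_rpow (by positivity) (by gcongr) (by positivity)
    have h3 : (2 * K₀ * Real.exp (-(a * t)) / D) ^ (1 / q)
        = C * Real.exp (-(c * t)) := by
      rw [hCdef, mul_comm (2 * K₀) (Real.exp (-(a * t))), mul_div_assoc,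
        Real.mul_rpow (Real.exp_pos _).le (by positivity), ← Real.exp_mul]
      rw [mul_comm]
      congr 1
      rw [hcdef]
      field_simp
    linarith [h1, h2, h3.le]
  -- a threshold T₀ beyond which the smallness condition holds
  obtain ⟨T₀, hT₀⟩ : ∃ T₀ : ℝ, ∀ t ≥ T₀, 0 < t ∧ 2 * K₀ * Real.exp (-(a * t)) ≤ A δ₀ := by
    have h1 : Filter.Tendsto (fun t : ℝ => 2 * K₀ * Real.exp (-(a * t)))
        Filter.atTop (nhds 0) := by
      have h2 : Filter.Tendsto (fun t : ℝ => a * t) Filter.atTop Filter.atTop :=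
        Filter.Tendsto.const_mul_atTop ha Filter.tendsto_id
      have h3 : Filter.Tendsto (fun t : ℝ => Real.exp (-(a * t)))
          Filter.atTop (nhds 0) :=
        Real.tendsto_exp_neg_atTop_nhds_zero.comp h2
      have := h3.const_mul (2 * K₀)
      simpa using this
    have h4 : ∀ᶠ t : ℝ in Filter.atTop,
        2 * K₀ * Real.exp (-(a * t)) ≤ A δ₀ := h1.eventually_le_const hAδpos
    have h5 : ∀ᶠ t : ℝ in Filter.atTop, 0 < t := Filter.eventually_gt_atTop 0
    obtain ⟨T₀, hT₀⟩ := Filter.eventually_atTop.1 (h5.and h4)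
    exact ⟨T₀, hT₀⟩
  -- main integrability claim
  have hInt : ∀ d : ℝ, 0 < d → IntegrableOn g (Set.Ioi d) := by
    intro d hd
    set T := max T₀ d with hTdef
    set M := max C (g d * Real.exp (c * T)) with hMdef
    have hmeas : AEStronglyMeasurable g (volume.restrict (Set.Ioi d)) :=
      (aemeasurable_restrict_of_antitoneOn measurableSet_Ioi
        (hanti.mono (Set.Ioi_subset_Ioi hd.le))).aestronglyMeasurable
    have hbound : ∀ t ∈ Set.Ioi d, ‖g t‖ ≤ M * Real.exp (-(c * t)) := by
      intro t ht
      have ht0 : 0 < t := lt_trans hd ht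
      rw [Real.norm_eq_abs, abs_of_nonneg (hg_fact t ht0).1]
      rcases le_or_gt T t with h | h
      · have := hCexp t ht0 (hT₀ t (le_trans (le_max_left _ _) h)).2
        have : g t ≤ C * Real.exp (-(c * t)) := this
        calc g t ≤ C * Real.exp (-(c * t)) := this
          _ ≤ M * Real.exp (-(c * t)) := by
              apply mul_le_mul_of_nonneg_right (le_max_left _ _) (Real.exp_pos _).le
      · have hgd : g t ≤ g d := hanti (Set.mem_Ioi.2 hd) (Set.mem_Ioi.2 ht0) ht.le
        have hgd0 : 0 ≤ g d := (hg_fact d hd).1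
        have h1 : g d ≤ g d * Real.exp (c * T) * Real.exp (-(c * t)) := by
          rw [mul_assoc, ← Real.exp_add]
          have h2 : (1:ℝ) ≤ Real.exp (c * T + -(c * t)) := by
            rw [Real.one_le_exp_iff]
            nlinarith [hc]
          nlinarith [hgd0, h2]
        calc g t ≤ g d := hgd
          _ ≤ g d * Real.exp (c * T) * Real.exp (-(c * t)) := h1
          _ ≤ M * Real.exp (-(c * t)) := by
              apply mul_le_mul_of_nonneg_right (le_max_right _ _) (Real.exp_pos _).le
    have hexpInt : IntegrableOn (fun t => M * Real.exp (-(c * t))) (Set.Ioi d) := by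
      have := (exp_neg_integrableOn_Ioi d hc).const_mul M
      simpa [neg_mul, IntegrableOn] using this
    exact hexpInt.mono' hmeas ((ae_restrict_mem measurableSet_Ioi).mono hbound)
  refine ⟨fun d hd => hInt d hd, ?_⟩
  -- tendsto part
  set T₁ : ℝ := max T₀ 1 with hT₁def
  have hT₁pos : 0 < T₁ := lt_of_lt_of_le one_pos (le_max_right _ _)
  have hIntT : IntegrableOn g (Set.Ioi T₁) := hInt T₁ hT₁pos
  have hsplit : ∀ d : ℝ, T₁ ≤ d →
      (∫ t in Set.Ioi d, g t) = (∫ t in Set.Ioi T₁, g t) - ∫ t in Set.Ioc T₁ d, g t := by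
    intro d hd
    have hU : Set.Ioc T₁ d ∪ Set.Ioi d = Set.Ioi T₁ := Set.Ioc_union_Ioi_eq_Ioi hd
    have hdisj : Disjoint (Set.Ioc T₁ d) (Set.Ioi d) := by
      apply Set.disjoint_left.2
      intro x hx hx'
      exact absurd hx.2 (not_le.2 hx')
    have h1 : IntegrableOn g (Set.Ioc T₁ d) :=
      hIntT.mono_set (fun x hx => Set.mem_Ioi.2 hx.1)
    have h2 : IntegrableOn g (Set.Ioi d) :=
      hIntT.mono_set (Set.Ioi_subset_Ioi hd)
    have := setIntegral_union hdisj measurableSet_Ioi h1 h2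
    rw [hU] at this
    rw [this]
    ring
  have htend : Filter.Tendsto (fun d => ∫ t in Set.Ioc T₁ d, g t)
      Filter.atTop (nhds (∫ t in Set.Ioi T₁, g t)) := by
    have h := intervalIntegral_tendsto_integral_Ioi T₁ hIntT Filter.tendsto_id
    apply h.congr'
    filter_upwards [Filter.eventually_ge_atTop T₁] with d hd
    simp only [id_eq]
    rw [intervalIntegral.integral_of_le hd]
  have hfinal : Filter.Tendsto
      (fun d => (∫ t in Set.Ioi T₁, g t) - ∫ t in Set.Ioc T₁ d, g t)
      Filter.atTop (nhds 0) := by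
    have := (tendsto_const_nhds (x := ∫ t in Set.Ioi T₁, g t)
      (f := Filter.atTop (α := ℝ))).sub htend
    simpa using this
  apply hfinal.congr'
  filter_upwards [Filter.eventually_ge_atTop T₁] with d hd
  exact (hsplit d hd).symm
end

section
/- Assume moreover that 𝒜 is unbounded, so that its range is [0,∞) and 𝒜⁻¹ is defined on all of [0,∞), and let n ≥ 2 be an integer. Then g₀(d) = ∫_{-∞}^d 𝒜⁻¹( e^{(n-1)s} ) ds is finite for every d ∈ ℝ (the integral converges at −∞), g₀ is twice continuously differentiable with g₀'(d) = 𝒜⁻¹(e^{(n-1)d}) > 0, and g₀ satisfies the ordinary differential equation 𝒜'(g₀'(d))·g₀''(d) − (n-1)·𝒜(g₀'(d)) = 0 for every d ∈ ℝ. -/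
open MeasureTheory

/-- Assume 𝒜 is unbounded, so that its range is `[0,∞)` and 𝒜⁻¹ is defined on
all of `[0,∞)`, and let `n ≥ 2`. Then `g₀(d) = ∫_{-∞}^d 𝒜⁻¹( e^{(n-1)s} ) ds` is finite for
every `d ∈ ℝ` (the integral converges at −∞), `g₀` is twice continuously differentiable with
`g₀'(d) = 𝒜⁻¹(e^{(n-1)d}) > 0`, and `𝒜'(g₀'(d))·g₀''(d) − (n-1)·𝒜(g₀'(d)) = 0` for every
`d ∈ ℝ`. -/
theorem stmt_14 (A Ainv : ℝ → ℝ)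
    (hA : ContDiffOn ℝ 1 A (Set.Ici 0))
    (hA0 : A 0 = 0)
    (hA' : ∀ s : ℝ, 0 < s → 0 < deriv A s)
    (q δ₀ D : ℝ) (hq : 0 < q) (hδ₀ : 0 < δ₀) (hD : 0 < D)
    (hgrowth : ∀ s ∈ Set.Icc (0:ℝ) δ₀, D * s ^ q ≤ A s)
    (hunbdd : ¬ BddAbove (A '' Set.Ici 0))
    (hAinvL : ∀ s : ℝ, 0 ≤ s → Ainv (A s) = s)
    (hAinvR : ∀ t : ℝ, 0 ≤ t → 0 ≤ Ainv t ∧ A (Ainv t) = t)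
    (n : ℕ) (hn : 2 ≤ n)
    (g₀ : ℝ → ℝ)
    (hg₀ : ∀ d : ℝ, g₀ d = ∫ s in Set.Iic d, Ainv (Real.exp (((n : ℝ) - 1) * s))) :
    (∀ d : ℝ,
      MeasureTheory.IntegrableOn (fun s => Ainv (Real.exp (((n : ℝ) - 1) * s))) (Set.Iic d)) ∧
    ContDiff ℝ 2 g₀ ∧
    (∀ d : ℝ, deriv g₀ d = Ainv (Real.exp (((n : ℝ) - 1) * d)) ∧ 0 < deriv g₀ d) ∧
    (∀ d : ℝ,
      deriv A (deriv g₀ d) * deriv (deriv g₀) d - ((n : ℝ) - 1) * A (deriv g₀ d) = 0) := by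
  set c : ℝ := (n : ℝ) - 1 with hc_def
  have hc : 0 < c := by
    have : (2 : ℝ) ≤ (n : ℝ) := by exact_mod_cast hn
    simp only [hc_def]; linarith
  set f : ℝ → ℝ := fun s => Ainv (Real.exp (c * s)) with hf_def
  -- A is strictly monotone on [0,∞)
  have hmonoA : StrictMonoOn A (Set.Ici 0) := by
    apply strictMonoOn_of_deriv_pos (convex_Ici 0) hA.continuousOn
    intro x hx
    rw [interior_Ici] at hx
    exact hA' x hx
  -- Ainv of a positive number is positive
  have hAinv_pos : ∀ t : ℝ, 0 < t → 0 < Ainv t := by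
    intro t ht
    rcases hAinvR t ht.le with ⟨h0, h1⟩
    rcases h0.lt_or_eq with h | h
    · exact h
    · exfalso; rw [← h, hA0] at h1; linarith
  -- Ainv is strictly monotone on (0,∞)
  have hAinv_smono : StrictMonoOn Ainv (Set.Ioi 0) := by
    intro t₁ ht₁ t₂ ht₂ hlt
    by_contra h
    push_neg at h
    have h2 : A (Ainv t₂) ≤ A (Ainv t₁) :=
      hmonoA.monotoneOn (hAinvR t₂ (le_of_lt ht₂)).1 (hAinvR t₁ (le_of_lt ht₁)).1 h
    rw [(hAinvR t₁ (le_of_lt ht₁)).2, (hAinvR t₂ (le_of_lt ht₂)).2] at h2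
    linarith
  -- Ainv is continuous at positive points
  have hAinv_cont : ∀ t : ℝ, 0 < t → ContinuousAt Ainv t := by
    intro t ht
    apply hAinv_smono.continuousAt_of_image_mem_nhds (Ioi_mem_nhds ht)
    have hsub : Set.Ioi (0:ℝ) ⊆ Ainv '' Set.Ioi 0 := by
      intro u hu
      have hu' : (0:ℝ) < u := hu
      have hAu : 0 < A u := by
        have := hmonoA (le_refl (0:ℝ)) hu'.le hu'
        rwa [hA0] at this
      exact ⟨A u, hAu, hAinvL u hu'.le⟩
    exact Filter.mem_of_superset (Ioi_mem_nhds (hAinv_pos t ht)) hsub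
  have hexp_cont : Continuous fun s : ℝ => Real.exp (c * s) :=
    Real.continuous_exp.comp (continuous_mul_left c)
  have hf_cont : Continuous f := by
    rw [continuous_iff_continuousAt]
    intro s
    exact ContinuousAt.comp (hAinv_cont _ (Real.exp_pos _)) hexp_cont.continuousAt
  have hf_pos : ∀ s : ℝ, 0 < f s := fun s => hAinv_pos _ (Real.exp_pos _)
  have hf_nonneg : ∀ s : ℝ, 0 ≤ f s := fun s => (hf_pos s).le
  -- A δ₀ > 0
  have hAδ₀ : 0 < A δ₀ := by
    have := hmonoA (le_refl (0:ℝ)) hδ₀.le hδ₀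
    rwa [hA0] at this
  -- Integrability
  have hint : ∀ d : ℝ, MeasureTheory.IntegrableOn f (Set.Iic d) := by
    intro d
    set a : ℝ := min d (Real.log (A δ₀) / c) with ha_def
    have had : a ≤ d := min_le_left _ _
    have hcover : Set.Iic d ⊆ Set.Iic a ∪ Set.Icc a d := by
      intro x hx
      rcases le_or_gt x a with h | h
      · exact Or.inl h
      · exact Or.inr ⟨h.le, hx⟩
    -- integrable on the tail Iic a
    have htail : MeasureTheory.IntegrableOn f (Set.Iic a) := by
      -- bound function
      set g : ℝ → ℝ := fun s => D⁻¹ ^ q⁻¹ * Real.exp ((c / q) * s) with hg_def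
      have hcq : 0 < c / q := div_pos hc hq
      have hg_int : MeasureTheory.IntegrableOn g (Set.Iic a) := by
        have h1 : MeasureTheory.IntegrableOn Real.exp (Set.Iic ((c / q) * a)) :=
          integrableOn_exp_Iic _
        have h2 : Integrable ((Set.Iic ((c / q) * a)).indicator Real.exp) :=
          (integrable_indicator_iff measurableSet_Iic).2 h1
        have h3 : Integrable (fun x => (Set.Iic ((c / q) * a)).indicator Real.exp ((c / q) * x)) :=
          h2.comp_mul_left' hcq.ne'
        have h4 : (fun x => (Set.Iic ((c / q) * a)).indicator Real.exp ((c / q) * x)) =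
            (Set.Iic a).indicator (fun x => Real.exp ((c / q) * x)) := by
          funext x
          by_cases hx : x ≤ a
          · have hx' : c / q * x ≤ c / q * a := mul_le_mul_of_nonneg_left hx hcq.le
            simp [Set.indicator_apply, Set.mem_Iic, hx, hx']
          · have hx' : ¬ c / q * x ≤ c / q * a := fun h => hx (le_of_mul_le_mul_left h hcq)
            simp [Set.indicator_apply, Set.mem_Iic, hx, hx']
        rw [h4] at h3
        have h5 : MeasureTheory.IntegrableOn (fun x => Real.exp ((c / q) * x)) (Set.Iic a) :=
          (integrable_indicator_iff measurableSet_Iic).1 h3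
        exact h5.const_mul _
      apply hg_int.mono' (hf_cont.aestronglyMeasurable.restrict)
      filter_upwards [MeasureTheory.ae_restrict_mem measurableSet_Iic] with s hs
      have hsa : s ≤ a := hs
      -- exp (c * s) ≤ A δ₀
      have hexp_le : Real.exp (c * s) ≤ A δ₀ := by
        have hsl : s ≤ Real.log (A δ₀) / c := le_trans hsa (min_le_right _ _)
        have : c * s ≤ Real.log (A δ₀) := by
          rw [mul_comm]
          exact (le_div_iff₀ hc).1 hsl
        calc Real.exp (c * s) ≤ Real.exp (Real.log (A δ₀)) := Real.exp_le_exp.2 this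
          _ = A δ₀ := Real.exp_log hAδ₀
      set t : ℝ := Real.exp (c * s) with ht_def
      have ht : 0 < t := Real.exp_pos _
      set u : ℝ := Ainv t with hu_def
      have hu0 : 0 ≤ u := (hAinvR t ht.le).1
      have hAu : A u = t := (hAinvR t ht.le).2
      have huδ : u ≤ δ₀ := by
        by_contra h
        push_neg at h
        have := hmonoA (Set.mem_Ici.2 hδ₀.le) (Set.mem_Ici.2 (hδ₀.le.trans h.le)) h
        rw [hAu] at this
        linarith
      have hgr : D * u ^ q ≤ t := by
        rw [← hAu]; exact hgrowth u ⟨hu0, huδ⟩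
      have hupow : u ^ q ≤ D⁻¹ * t := by
        rw [inv_mul_eq_div]
        exact (le_div_iff₀' hD).2 hgr
      have hu_le : u ≤ D⁻¹ ^ q⁻¹ * t ^ q⁻¹ := by
        have h1 : (u ^ q) ^ q⁻¹ ≤ (D⁻¹ * t) ^ q⁻¹ :=
          Real.rpow_le_rpow (Real.rpow_nonneg hu0 q) hupow (inv_nonneg.2 hq.le)
        rw [← Real.rpow_mul hu0, mul_inv_cancel₀ hq.ne', Real.rpow_one,
          Real.mul_rpow (inv_nonneg.2 hD.le) ht.le] at h1
        exact h1
      have ht_pow : t ^ q⁻¹ = Real.exp ((c / q) * s) := by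
        rw [ht_def, ← Real.exp_log (Real.exp_pos (c * s)), Real.log_exp,
          ← Real.exp_mul]
        ring_nf
      rw [Real.norm_eq_abs, abs_of_nonneg (hf_nonneg s)]
      calc f s = u := rfl
        _ ≤ D⁻¹ ^ q⁻¹ * t ^ q⁻¹ := hu_le
        _ = g s := by rw [ht_pow]
    have hmid : MeasureTheory.IntegrableOn f (Set.Icc a d) := hf_cont.integrableOn_Icc
    exact (htail.union hmid).mono_set hcover
  -- FTC
  have hIInt : ∀ x y : ℝ, IntervalIntegrable f volume x y := by
    intro x y
    apply MeasureTheory.IntegrableOn.intervalIntegrable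
    exact (hint (max x y)).mono_set (fun z hz => hz.2)
  have hkey : g₀ = fun x => g₀ 0 + ∫ s in (0:ℝ)..x, f s := by
    funext x
    have h := intervalIntegral.integral_Iic_sub_Iic (μ := volume) (f := f) (hint 0) (hint x)
    rw [hg₀ x, hg₀ 0] at *
    linarith [h]
  have hFTC : ∀ d : ℝ, HasDerivAt g₀ (f d) d := by
    intro d
    rw [hkey]
    exact (intervalIntegral.integral_hasDerivAt_right (hIInt 0 d)
      (hf_cont.stronglyMeasurable.stronglyMeasurableAtFilter)
      hf_cont.continuousAt).const_add _
  have hderiv : deriv g₀ = f := funext fun d => (hFTC d).deriv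
  -- derivative of f
  have hf_hasderiv : ∀ d : ℝ, HasDerivAt f ((deriv A (f d))⁻¹ * (Real.exp (c * d) * c)) d := by
    intro d
    set t : ℝ := Real.exp (c * d) with ht_def
    have ht : 0 < t := Real.exp_pos _
    have hpos : 0 < Ainv t := hAinv_pos t ht
    have hdiffA : DifferentiableAt ℝ A (Ainv t) :=
      (hA.differentiableOn (by norm_num)).differentiableAt (Ici_mem_nhds hpos)
    have hAt : HasDerivAt A (deriv A (Ainv t)) (Ainv t) := hdiffA.hasDerivAt
    have hne : deriv A (Ainv t) ≠ 0 := (hA' _ hpos).ne'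
    have hfg : ∀ᶠ y in nhds t, A (Ainv y) = y := by
      filter_upwards [Ioi_mem_nhds ht] with y hy
      exact (hAinvR y (le_of_lt hy)).2
    have houter : HasDerivAt Ainv (deriv A (Ainv t))⁻¹ t :=
      HasDerivAt.of_local_left_inverse (hAinv_cont t ht) hAt hne hfg
    have hinner : HasDerivAt (fun s => Real.exp (c * s)) (Real.exp (c * d) * c) d := by
      have h1 : HasDerivAt (fun s : ℝ => c * s) c d := (hasDerivAt_id d).const_mul c |>.congr_deriv (by ring)
      exact (Real.hasDerivAt_exp (c * d)).comp d h1
    exact houter.comp d hinner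
  have hf_deriv_eq : ∀ d : ℝ,
      deriv f d = (deriv A (f d))⁻¹ * (Real.exp (c * d) * c) := fun d => (hf_hasderiv d).deriv
  -- continuity of deriv A at positive points
  have hderivA_cont : ∀ x : ℝ, 0 < x → ContinuousAt (deriv A) x := by
    intro x hx
    have h1 : ContinuousOn (derivWithin A (Set.Ici 0)) (Set.Ici 0) :=
      hA.continuousOn_derivWithin (uniqueDiffOn_Ici 0) (by norm_num)
    have h2 : ContinuousAt (derivWithin A (Set.Ici 0)) x :=
      h1.continuousAt (Ici_mem_nhds hx)
    apply h2.congr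
    filter_upwards [Ioi_mem_nhds hx] with y hy
    exact derivWithin_of_mem_nhds (Ici_mem_nhds hy)
  have hcont_derivf : Continuous (deriv f) := by
    have heq : deriv f = fun d => (deriv A (f d))⁻¹ * (Real.exp (c * d) * c) :=
      funext hf_deriv_eq
    rw [heq, continuous_iff_continuousAt]
    intro d
    have h1 : ContinuousAt (fun d => deriv A (f d)) d :=
      (hderivA_cont (f d) (hf_pos d)).comp hf_cont.continuousAt
    have h2 : ContinuousAt (fun d => (deriv A (f d))⁻¹) d :=
      h1.inv₀ (hA' _ (hf_pos d)).ne'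
    exact h2.mul (hexp_cont.continuousAt.mul continuousAt_const)
  have hg₀_diff : Differentiable ℝ g₀ := fun d => (hFTC d).differentiableAt
  have hf_diff : Differentiable ℝ f := fun d => (hf_hasderiv d).differentiableAt
  refine ⟨hint, ?_, ?_, ?_⟩
  · -- ContDiff ℝ 2
    have h2 : (2 : WithTop ℕ∞) = 1 + 1 := by norm_num
    rw [h2, contDiff_succ_iff_deriv]
    refine ⟨hg₀_diff, by simp, ?_⟩
    rw [hderiv, contDiff_one_iff_deriv]
    exact ⟨hf_diff, hcont_derivf⟩
  · intro d
    rw [hderiv]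
    exact ⟨rfl, hf_pos d⟩
  · intro d
    rw [hderiv, hf_deriv_eq d]
    have hAf : A (f d) = Real.exp (c * d) := (hAinvR _ (Real.exp_pos _).le).2
    have hne : deriv A (f d) ≠ 0 := (hA' _ (hf_pos d)).ne'
    rw [hAf]
    field_simp
    ring
end
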